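/- arXiv:1001.3252 — 8 statements merged into one kernel-verified Lean document; each statement's English description precedes it below -/
import Mathlib

section
/- Let n ≥ 2 be an integer, σ > 0, r_- > 0, and i ≠ j indices in {1,…,n}. Let 𝐱 ∈ (ℝ³×ℝ)^n satisfy σx̌_i ≥ r_-, σx̌_j ≥ r_-, and |x_i−x_j| = σ(x̌_i+x̌_j), and set 𝐱^{es} = 𝐱 − r_-√(2+2σ²)·𝐧_{ij}(𝐱). Then for every 𝐳 ∈ (ℝ³×ℝ)^n one has |(x^{es}_i+z_i) − (x^{es}_j+z_j)| − σ(x̌^{es}_i + ž_i + x̌^{es}_j + ž_j) ≤ √(2+2σ²)·‖𝐳‖ − 2r_-(1+σ²). -/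
open scoped RealInnerProductSpace

noncomputable section

/-- A globule: a point of `ℝ³ × ℝ` with the Euclidean (L²) norm;
the first component is the center, the second the radius. -/
abbrev Glob : Type := WithLp 2 (EuclideanSpace ℝ (Fin 3) × ℝ)

/-- The configuration space of `n` globules, `(ℝ³ × ℝ)ⁿ` with the Euclidean norm. -/
abbrev Conf (n : ℕ) : Type := PiLp 2 (fun _ : Fin n => Glob)

/-- The center of the `i`-th globule. -/
def ctr {n : ℕ} (x : Conf n) (i : Fin n) : EuclideanSpace ℝ (Fin 3) :=
  (WithLp.equiv 2 (EuclideanSpace ℝ (Fin 3) × ℝ) (x i)).1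

/-- The radius of the `i`-th globule. -/
def rad {n : ℕ} (x : Conf n) (i : Fin n) : ℝ :=
  (WithLp.equiv 2 (EuclideanSpace ℝ (Fin 3) × ℝ) (x i)).2

/-- The vector `𝐰` at a configuration `x`: its `i`-th center component is
`(x_i - x_j)/(σ(x̌_i + x̌_j))`, its `j`-th center component is the opposite,
its radius components at `i` and `j` are `-σ`, all other components vanish. -/
def wvec (σ : ℝ) {n : ℕ} (i j : Fin n) (x : Conf n) : Conf n := WithLp.toLp 2 fun k =>
  (WithLp.equiv 2 (EuclideanSpace ℝ (Fin 3) × ℝ)).symm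
    (if k = i then (σ * (rad x i + rad x j))⁻¹ • (ctr x i - ctr x j)
      else if k = j then (σ * (rad x i + rad x j))⁻¹ • (ctr x j - ctr x i)
      else 0,
     if k = i ∨ k = j then -σ else 0)

/-- The inward normal vector `𝐧_{ij}(x) = 𝐰/√(2+2σ²)`. -/
def nvec (σ : ℝ) {n : ℕ} (i j : Fin n) (x : Conf n) : Conf n :=
  (Real.sqrt (2 + 2 * σ ^ 2))⁻¹ • wvec σ i j x

/-- The set `𝒟_{ij} = {𝐱 : |x_i - x_j| ≥ σ(x̌_i + x̌_j)}`. -/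
def Dset (σ : ℝ) {n : ℕ} (i j : Fin n) : Set (Conf n) :=
  {x | σ * (rad x i + rad x j) ≤ ‖ctr x i - ctr x j‖}

/-- The set `𝒜_g^σ` of allowed (rescaled) configurations. -/
def AgSet (σ rm rp : ℝ) (n : ℕ) : Set (Conf n) :=
  {x | (∀ i, rm / σ ≤ rad x i ∧ rad x i ≤ rp / σ) ∧
    ∀ i j : Fin n, i ≠ j → σ * (rad x i + rad x j) ≤ ‖ctr x i - ctr x j‖}

/-- The function `f(𝐱) = |x_i - x_j| - σ(x̌_i + x̌_j)`. -/
def fij (σ : ℝ) {n : ℕ} (i j : Fin n) (x : Conf n) : ℝ :=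
  ‖ctr x i - ctr x j‖ - σ * (rad x i + rad x j)

end

lemma ctr_sub' {n : ℕ} (x y : Conf n) (k : Fin n) : ctr (x - y) k = ctr x k - ctr y k := rfl
lemma rad_sub' {n : ℕ} (x y : Conf n) (k : Fin n) : rad (x - y) k = rad x k - rad y k := rfl
lemma ctr_smul' {n : ℕ} (c : ℝ) (y : Conf n) (k : Fin n) : ctr (c • y) k = c • ctr y k := rfl
lemma rad_smul' {n : ℕ} (c : ℝ) (y : Conf n) (k : Fin n) : rad (c • y) k = c * rad y k := rfl
lemma ctr_wvec_i (σ : ℝ) {n : ℕ} (i j : Fin n) (x : Conf n) :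
    ctr (wvec σ i j x) i = (σ * (rad x i + rad x j))⁻¹ • (ctr x i - ctr x j) := by
  simp [ctr, wvec]
lemma ctr_wvec_j (σ : ℝ) {n : ℕ} (i j : Fin n) (hij : i ≠ j) (x : Conf n) :
    ctr (wvec σ i j x) j = (σ * (rad x i + rad x j))⁻¹ • (ctr x j - ctr x i) := by
  simp [ctr, wvec, hij.symm]
lemma rad_wvec_i (σ : ℝ) {n : ℕ} (i j : Fin n) (x : Conf n) : rad (wvec σ i j x) i = -σ := by
  simp [rad, wvec]
lemma rad_wvec_j (σ : ℝ) {n : ℕ} (i j : Fin n) (x : Conf n) : rad (wvec σ i j x) j = -σ := by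
  simp [rad, wvec]
lemma cs4 (σ a b c d : ℝ) : (a + b - σ * (c + d)) ^ 2 ≤ (2 + 2 * σ ^ 2) * (a ^ 2 + c ^ 2 + (b ^ 2 + d ^ 2)) := by
  nlinarith [sq_nonneg (a - b), sq_nonneg (c + σ * a), sq_nonneg (d + σ * a),
    sq_nonneg (c + σ * b), sq_nonneg (d + σ * b), sq_nonneg (σ * (c - d))]

lemma glob_norm_sq {n : ℕ} (z : Conf n) (k : Fin n) :
    ‖ctr z k‖ ^ 2 + (rad z k) ^ 2 = ‖z k‖ ^ 2 := by
  rw [WithLp.prod_norm_sq_eq_of_L2]; simp [ctr, rad, sq_abs]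

theorem statement1 (n : ℕ) (hn : 2 ≤ n) (σ : ℝ) (hσ : 0 < σ) (rm : ℝ) (hrm : 0 < rm)
    (i j : Fin n) (hij : i ≠ j) (x : Conf n)
    (hxi : rm ≤ σ * rad x i) (hxj : rm ≤ σ * rad x j)
    (hc : ‖ctr x i - ctr x j‖ = σ * (rad x i + rad x j)) :
    ∀ z : Conf n,
      ‖(ctr (x - (rm * Real.sqrt (2 + 2 * σ ^ 2)) • nvec σ i j x) i + ctr z i) -
          (ctr (x - (rm * Real.sqrt (2 + 2 * σ ^ 2)) • nvec σ i j x) j + ctr z j)‖ -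
        σ * (rad (x - (rm * Real.sqrt (2 + 2 * σ ^ 2)) • nvec σ i j x) i + rad z i +
             rad (x - (rm * Real.sqrt (2 + 2 * σ ^ 2)) • nvec σ i j x) j + rad z j) ≤
      Real.sqrt (2 + 2 * σ ^ 2) * ‖z‖ - 2 * rm * (1 + σ ^ 2) := by
  intro z
  have hS2 : (0:ℝ) < 2 + 2 * σ ^ 2 := by positivity
  set S := Real.sqrt (2 + 2 * σ ^ 2) with hSdef
  have hSpos : 0 < S := Real.sqrt_pos.mpr hS2
  have hSsq : S ^ 2 = 2 + 2 * σ ^ 2 := Real.sq_sqrt hS2.le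
  set t := σ * (rad x i + rad x j) with htdef
  have htge : 2 * rm ≤ t := by
    have : t = σ * rad x i + σ * rad x j := by rw [htdef]; ring
    linarith
  have htpos : 0 < t := by linarith
  have hsmul : (rm * S) • nvec σ i j x = rm • wvec σ i j x := by
    rw [nvec, smul_smul, ← hSdef]
    congr 1
    field_simp
  set X := x - (rm * S) • nvec σ i j x with hXdef
  have hci : ctr X i = ctr x i - rm • (t⁻¹ • (ctr x i - ctr x j)) := by
    rw [hXdef, ctr_sub', hsmul, ctr_smul', ctr_wvec_i, ← htdef]
  have hcj : ctr X j = ctr x j - rm • (t⁻¹ • (ctr x j - ctr x i)) := by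
    rw [hXdef, ctr_sub', hsmul, ctr_smul', ctr_wvec_j σ i j hij, ← htdef]
  have hri : rad X i = rad x i + rm * σ := by
    rw [hXdef, rad_sub', hsmul, rad_smul', rad_wvec_i]; ring
  have hrj : rad X j = rad x j + rm * σ := by
    rw [hXdef, rad_sub', hsmul, rad_smul', rad_wvec_j]; ring
  -- the displaced difference of centers
  have hdiff : ctr X i - ctr X j = (1 - 2 * rm * t⁻¹) • (ctr x i - ctr x j) := by
    rw [hci, hcj]
    module
  have hnorm : ‖ctr X i - ctr X j‖ = t - 2 * rm := by
    rw [hdiff, norm_smul, hc, Real.norm_eq_abs, abs_of_nonneg]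
    · field_simp
    · have h6 : 2 * rm / t ≤ 1 := (div_le_one htpos).mpr (by linarith)
      have h7 : 2 * rm * t⁻¹ = 2 * rm / t := by ring
      linarith [h7 ▸ h6]
  -- key inequality for z
  have hz2 : ‖z i‖ ^ 2 + ‖z j‖ ^ 2 ≤ ‖z‖ ^ 2 := by
    rw [PiLp.norm_sq_eq_of_L2]
    have hsub : ({i, j} : Finset (Fin n)) ⊆ Finset.univ := Finset.subset_univ _
    calc ‖z i‖ ^ 2 + ‖z j‖ ^ 2 = ∑ k ∈ ({i, j} : Finset (Fin n)), ‖z k‖ ^ 2 := by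
          rw [Finset.sum_pair hij]
      _ ≤ ∑ k, ‖z k‖ ^ 2 :=
          Finset.sum_le_sum_of_subset_of_nonneg hsub (fun k _ _ => by positivity)
  have key : ‖ctr z i - ctr z j‖ - σ * (rad z i + rad z j) ≤ S * ‖z‖ := by
    set a := ‖ctr z i‖
    set b := ‖ctr z j‖
    set c := rad z i
    set d := rad z j
    have ha : 0 ≤ a := norm_nonneg _
    have hb : 0 ≤ b := norm_nonneg _
    have h1 : ‖ctr z i - ctr z j‖ ≤ a + b := norm_sub_le _ _
    have hzi := glob_norm_sq z i
    have hzj := glob_norm_sq z j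
    have h2 : (a + b - σ * (c + d)) ^ 2 ≤ (2 + 2 * σ ^ 2) * ‖z‖ ^ 2 := by
      have hcs := cs4 σ a b c d
      have h5 : a ^ 2 + c ^ 2 + (b ^ 2 + d ^ 2) ≤ ‖z‖ ^ 2 := by
        rw [hzi, hzj]; linarith
      nlinarith
    rcases le_or_gt (a + b - σ * (c + d)) 0 with h | h
    · have : 0 ≤ S * ‖z‖ := by positivity
      linarith
    · have h3 : (a + b - σ * (c + d)) ^ 2 ≤ (S * ‖z‖) ^ 2 := by
        rw [mul_pow, hSsq]; exact h2
      have h4 : a + b - σ * (c + d) ≤ S * ‖z‖ := by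
        have hSz : 0 ≤ S * ‖z‖ := by positivity
        exact (pow_le_pow_iff_left₀ h.le hSz two_ne_zero).mp h3
      linarith
  -- combine
  have htriangle : ‖(ctr X i + ctr z i) - (ctr X j + ctr z j)‖ ≤
      (t - 2 * rm) + ‖ctr z i - ctr z j‖ := by
    calc ‖(ctr X i + ctr z i) - (ctr X j + ctr z j)‖
        = ‖(ctr X i - ctr X j) + (ctr z i - ctr z j)‖ := by congr 1; abel
      _ ≤ ‖ctr X i - ctr X j‖ + ‖ctr z i - ctr z j‖ := norm_add_le _ _
      _ = (t - 2 * rm) + ‖ctr z i - ctr z j‖ := by rw [hnorm]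
  rw [hri, hrj]
  have : σ * (rad x i + rm * σ + rad z i + (rad x j + rm * σ) + rad z j)
      = t + 2 * rm * σ ^ 2 + σ * (rad z i + rad z j) := by rw [htdef]; ring
  rw [this]
  linarith
end

section
/- Let n ≥ 2 be an integer, σ > 0, 0 < r_- < r_+, and i ≠ j indices in {1,…,n}. For every 𝐱 ∈ 𝒜_g^σ with |x_i−x_j| = σ(x̌_i+x̌_j) and every 𝐲 ∈ 𝒟_{ij}, one has ⟨𝐲 − 𝐱, 𝐧_{ij}(𝐱)⟩ ≥ − ‖𝐲 − 𝐱‖² / (2 r_- √(2+2σ²)), where ⟨·,·⟩ is the Euclidean inner product on (ℝ³×ℝ)^n. -/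
open scoped RealInnerProductSpace

set_option maxHeartbeats 1000000 in
theorem statement3 (n : ℕ) (hn : 2 ≤ n) (σ : ℝ) (hσ : 0 < σ) (rm rp : ℝ)
    (hrm : 0 < rm) (hrmp : rm < rp) (i j : Fin n) (hij : i ≠ j)
    (x : Conf n) (hx : x ∈ AgSet σ rm rp n)
    (hc : ‖ctr x i - ctr x j‖ = σ * (rad x i + rad x j))
    (y : Conf n) (hy : y ∈ Dset σ i j) :
    ⟪y - x, nvec σ i j x⟫ ≥ -‖y - x‖ ^ 2 / (2 * rm * Real.sqrt (2 + 2 * σ ^ 2)) := by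
  obtain ⟨hrad, -⟩ := hx
  set a := ctr x i - ctr x j with ha
  set b := ctr y i - ctr y j with hb
  set s := σ * (rad x i + rad x j) with hs
  have hsi : rm ≤ σ * rad x i := by
    have h := (hrad i).1
    rw [div_le_iff₀ hσ] at h
    linarith [h]
  have hsj : rm ≤ σ * rad x j := by
    have h := (hrad j).1
    rw [div_le_iff₀ hσ] at h
    linarith [h]
  have hs2 : 2 * rm ≤ s := by
    have : s = σ * rad x i + σ * rad x j := by rw [hs]; ring
    linarith
  have hspos : 0 < s := by linarith
  have hna : ‖a‖ = s := hc
  set z := y - x with hz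
  -- component identities
  have hzi1 : ((z i : Glob)).fst = ctr y i - ctr x i := rfl
  have hzj1 : ((z j : Glob)).fst = ctr y j - ctr x j := rfl
  have hzi2 : ((z i : Glob)).snd = rad y i - rad x i := rfl
  have hzj2 : ((z j : Glob)).snd = rad y j - rad x j := rfl
  -- reduction of the inner product to two components
  have key : ⟪z, wvec σ i j x⟫ =
      s⁻¹ * ⟪b - a, a⟫ - σ * ((rad y i + rad y j) - (rad x i + rad x j)) := by
    rw [PiLp.inner_apply]
    have hzero : ∀ k ∈ Finset.univ, k ∉ ({i, j} : Finset (Fin n)) →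
        ⟪z k, wvec σ i j x k⟫ = 0 := by
      intro k _ hk
      simp only [Finset.mem_insert, Finset.mem_singleton, not_or] at hk
      have hw : wvec σ i j x k = 0 := by
        simp [wvec, hk.1, hk.2, Prod.mk_zero_zero, PiLp.toLp_apply]
      rw [hw, inner_zero_right]
    rw [← Finset.sum_subset (Finset.subset_univ ({i, j} : Finset (Fin n))) hzero,
      Finset.sum_pair hij]
    have hwi : (wvec σ i j x i : Glob) =
        (WithLp.equiv 2 (EuclideanSpace ℝ (Fin 3) × ℝ)).symm (s⁻¹ • a, -σ) := by
      simp only [wvec, PiLp.toLp_apply, if_pos rfl, if_neg hij, eq_self_iff_true, true_or, if_true]; rfl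
    have hwj : (wvec σ i j x j : Glob) =
        (WithLp.equiv 2 (EuclideanSpace ℝ (Fin 3) × ℝ)).symm (s⁻¹ • (ctr x j - ctr x i), -σ) := by
      simp only [wvec, PiLp.toLp_apply, if_pos rfl, if_neg hij.symm, eq_self_iff_true, or_true, if_true]; rfl
    rw [hwi, hwj, WithLp.prod_inner_apply, WithLp.prod_inner_apply,
      WithLp.equiv_symm_apply, WithLp.ofLp_toLp, WithLp.ofLp_toLp,
      show (WithLp.ofLp (z i)).1 = ctr y i - ctr x i from hzi1,
      show (WithLp.ofLp (z i)).2 = rad y i - rad x i from hzi2,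
      show (WithLp.ofLp (z j)).1 = ctr y j - ctr x j from hzj1,
      show (WithLp.ofLp (z j)).2 = rad y j - rad x j from hzj2]
    have hcc : ctr x j - ctr x i = -a := by rw [ha]; abel
    rw [hcc, hb, ha]
    simp only [inner_smul_right, inner_neg_right, inner_sub_left, inner_sub_right,
      RCLike.inner_apply, conj_trivial]
    ring
  -- the scalar inequality
  have hbineq : σ * (rad y i + rad y j) ≤ ‖b‖ := hy
  have e1 : ‖b - a‖ ^ 2 = ‖b‖ ^ 2 - 2 * ⟪b, a⟫ + ‖a‖ ^ 2 := norm_sub_sq_real b a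
  have e2 : ⟪b - a, a⟫ = ⟪b, a⟫ - ‖a‖ ^ 2 := by
    rw [inner_sub_left, real_inner_self_eq_norm_sq]
  have hinv : s * s⁻¹ = 1 := mul_inv_cancel₀ hspos.ne'
  have h2 : -‖b - a‖ ^ 2 ≤ 2 * s * ⟪z, wvec σ i j x⟫ := by
    rw [key]
    have hbn : 0 ≤ ‖b‖ := norm_nonneg b
    nlinarith [sq_nonneg (‖b‖ - s), hbineq, hspos, e1, e2, hinv, hna]
  -- the norm inequality
  have hnorm : ‖b - a‖ ^ 2 ≤ 2 * ‖z‖ ^ 2 := by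
    have hzsum : ‖z‖ ^ 2 = ∑ k, ‖z k‖ ^ 2 := PiLp.norm_sq_eq_of_L2 _ z
    have hge : ‖z i‖ ^ 2 + ‖z j‖ ^ 2 ≤ ‖z‖ ^ 2 := by
      rw [hzsum]
      calc ‖z i‖ ^ 2 + ‖z j‖ ^ 2
          = ∑ k ∈ ({i, j} : Finset (Fin n)), ‖z k‖ ^ 2 :=
            (Finset.sum_pair (f := fun k => ‖z k‖ ^ 2) hij).symm
        _ ≤ ∑ k, ‖z k‖ ^ 2 := Finset.sum_le_sum_of_subset_of_nonneg
            (Finset.subset_univ _) (fun k _ _ => sq_nonneg _)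
    have hni : ‖(z i : Glob).fst‖ ^ 2 ≤ ‖z i‖ ^ 2 := by
      rw [WithLp.prod_norm_sq_eq_of_L2]
      nlinarith [sq_nonneg ‖(z i : Glob).snd‖]
    have hnj : ‖(z j : Glob).fst‖ ^ 2 ≤ ‖z j‖ ^ 2 := by
      rw [WithLp.prod_norm_sq_eq_of_L2]
      nlinarith [sq_nonneg ‖(z j : Glob).snd‖]
    have hba : b - a = (z i : Glob).fst - (z j : Glob).fst := by
      rw [hzi1, hzj1, hb, ha]; abel
    have htr : ‖b - a‖ ≤ ‖(z i : Glob).fst‖ + ‖(z j : Glob).fst‖ := by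
      rw [hba]; exact norm_sub_le _ _
    have h0 : 0 ≤ ‖b - a‖ := norm_nonneg _
    nlinarith [sq_nonneg (‖(z i : Glob).fst‖ - ‖(z j : Glob).fst‖), norm_nonneg ((z i : Glob).fst), norm_nonneg ((z j : Glob).fst)]
  -- combine: ⟪z, w⟫ ≥ -‖z‖^2/(2 rm)
  have hmain : -‖z‖ ^ 2 / (2 * rm) ≤ ⟪z, wvec σ i j x⟫ := by
    rw [div_le_iff₀ (by positivity : (0:ℝ) < 2 * rm)]
    nlinarith [h2, hnorm, hspos, hs2, sq_nonneg ‖z‖, real_inner_smul_right z (wvec σ i j x) 1]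
  -- conclude
  have hcpos : 0 < Real.sqrt (2 + 2 * σ ^ 2) := Real.sqrt_pos.mpr (by positivity)
  have hns : ⟪z, nvec σ i j x⟫ = (Real.sqrt (2 + 2 * σ ^ 2))⁻¹ * ⟪z, wvec σ i j x⟫ := by
    rw [nvec, real_inner_smul_right]
  rw [ge_iff_le, hns]
  have := mul_le_mul_of_nonneg_left hmain (by positivity : (0:ℝ) ≤ (Real.sqrt (2 + 2 * σ ^ 2))⁻¹)
  calc -‖z‖ ^ 2 / (2 * rm * Real.sqrt (2 + 2 * σ ^ 2))
      = (Real.sqrt (2 + 2 * σ ^ 2))⁻¹ * (-‖z‖ ^ 2 / (2 * rm)) := by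
        rw [← div_div, div_eq_inv_mul]
    _ ≤ (Real.sqrt (2 + 2 * σ ^ 2))⁻¹ * ⟪z, wvec σ i j x⟫ := this
end

section
/- Let E be a real inner product space and let a, b ∈ E be nonzero vectors with ‖a − b‖ ≤ ‖a‖. Then ⟨a/‖a‖, b/‖b‖⟩ ≥ (‖a‖ − ‖a−b‖)/(‖a‖ + ‖a−b‖) ≥ 1 − 2‖a−b‖/‖a‖. -/
open scoped RealInnerProductSpace

theorem statement4 {E : Type*} [NormedAddCommGroup E] [InnerProductSpace ℝ E]
    (a b : E) (ha : a ≠ 0) (hb : b ≠ 0) (h : ‖a - b‖ ≤ ‖a‖) :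
    ⟪‖a‖⁻¹ • a, ‖b‖⁻¹ • b⟫ ≥ (‖a‖ - ‖a - b‖) / (‖a‖ + ‖a - b‖) ∧
    (‖a‖ - ‖a - b‖) / (‖a‖ + ‖a - b‖) ≥ 1 - 2 * ‖a - b‖ / ‖a‖ := by
  have hA : (0:ℝ) < ‖a‖ := norm_pos_iff.mpr ha
  have hB : (0:ℝ) < ‖b‖ := norm_pos_iff.mpr hb
  have hd : (0:ℝ) ≤ ‖a - b‖ := norm_nonneg _
  have hsq : ‖a - b‖^2 = ‖a‖^2 - 2 * ⟪a,b⟫ + ‖b‖^2 := norm_sub_sq_real a b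
  have hinner : ⟪‖a‖⁻¹ • a, ‖b‖⁻¹ • b⟫ = ‖a‖⁻¹ * (‖b‖⁻¹ * ⟪a,b⟫) := by
    rw [real_inner_smul_left, real_inner_smul_right]
  have hAd : (0:ℝ) < ‖a‖ + ‖a - b‖ := by linarith
  constructor
  · have hi : ⟪a,b⟫ = (‖a‖^2 + ‖b‖^2 - ‖a - b‖^2)/2 := by linarith
    have hrw : ‖a‖⁻¹ * (‖b‖⁻¹ * ((‖a‖^2 + ‖b‖^2 - ‖a - b‖^2)/2))
        = ((‖a‖^2 + ‖b‖^2 - ‖a - b‖^2)/2) / (‖a‖ * ‖b‖) := by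
      field_simp
    rw [hinner, hi, hrw, ge_iff_le, div_le_div_iff₀ hAd (by positivity)]
    nlinarith [sq_nonneg ((‖a‖ + ‖a - b‖) * ‖b‖ - ‖a‖ * (‖a‖ - ‖a - b‖)),
      mul_nonneg (mul_nonneg hd hd) hd, mul_nonneg hd (sub_nonneg.mpr h),
      mul_nonneg (mul_nonneg hd hd) (sub_nonneg.mpr h)]
  · set t := 2 * ‖a - b‖ / ‖a‖ with htdef
    have ht : t * ‖a‖ = 2 * ‖a - b‖ := by
      rw [htdef]; field_simp
    have ht0 : 0 ≤ t := by positivity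
    rw [ge_iff_le, le_div_iff₀ hAd]
    nlinarith [mul_nonneg ht0 hd]
end

section
/- (Uniform Normal Cone property of 𝒟_{ij} on 𝒜_g^σ.) Let n ≥ 2 be an integer, σ > 0, 0 < r_- < r_+, and i ≠ j indices in {1,…,n}. Let β ∈ (0,1) and let δ > 0 satisfy δ ≤ (r_-(1+σ²)/√2)·(1 − √(1−β²)). Then for all 𝐱, 𝐲 ∈ 𝒜_g^σ with |x_i−x_j| = σ(x̌_i+x̌_j), |y_i−y_j| = σ(y̌_i+y̌_j) and ‖𝐱 − 𝐲‖ ≤ δ, one has ⟨𝐧_{ij}(𝐲), 𝐧_{ij}(𝐱)⟩ ≥ √(1−β²). -/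
open scoped RealInnerProductSpace

lemma wvec_inner (σ : ℝ) {n : ℕ} (i j : Fin n) (hij : i ≠ j) (x y : Conf n) :
    ⟪wvec σ i j y, wvec σ i j x⟫ =
      2 * ⟪(σ * (rad y i + rad y j))⁻¹ • (ctr y i - ctr y j),
            (σ * (rad x i + rad x j))⁻¹ • (ctr x i - ctr x j)⟫ + 2 * σ ^ 2 := by
  rw [PiLp.inner_apply]
  rw [show (Finset.univ : Finset (Fin n)) = insert i {j} ∪ (Finset.univ \ insert i {j}) by
    simp [Finset.union_sdiff_of_subset]]
  rw [Finset.sum_union (Finset.disjoint_sdiff)]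
  have h1 : ∑ k ∈ Finset.univ \ insert i {j},
      ⟪wvec σ i j y k, wvec σ i j x k⟫ = 0 := by
    apply Finset.sum_eq_zero
    intro k hk
    simp only [Finset.mem_sdiff, Finset.mem_insert, Finset.mem_singleton, not_or] at hk
    simp [wvec, hk.2.1, hk.2.2, WithLp.prod_inner_apply]
  rw [h1, add_zero, Finset.sum_insert (by simp [hij]), Finset.sum_singleton]
  simp only [wvec, WithLp.prod_inner_apply, WithLp.equiv_symm_apply, WithLp.ofLp_toLp,
    if_pos rfl, hij, Ne.symm hij, if_neg, ite_true, ite_false, or_true, true_or]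
  rw [show ctr y j - ctr y i = -(ctr y i - ctr y j) by abel,
      show ctr x j - ctr x i = -(ctr x i - ctr x j) by abel]
  simp only [smul_neg, inner_neg_neg, RCLike.inner_apply, conj_trivial]
  ring

lemma aux_sqrt_lt_one (β : ℝ) (hβ0 : 0 < β) (hβ1 : β < 1) :
    Real.sqrt (1 - β ^ 2) < 1 := by
  have h0 : (0:ℝ) ≤ 1 - β ^ 2 := by nlinarith
  have h := Real.sq_sqrt h0
  have h2 := Real.sqrt_nonneg (1 - β ^ 2)
  nlinarith

lemma aux_two_rm (σ rm u v : ℝ) (h1 : rm ≤ u * σ) (h2 : rm ≤ v * σ) :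
    2 * rm ≤ σ * (u + v) := by nlinarith

lemma aux_Ksq (K : ℝ) (h0 : 0 ≤ K) (h2 : K < 2) : K ^ 2 ≤ 2 * K := by nlinarith

lemma aux_abs (A B : ℝ) (hA : 0 < A) (hB : 0 < B) :
    |A⁻¹ - B⁻¹| * B = |B - A| * A⁻¹ := by
  have h : (A⁻¹ - B⁻¹) * B = (B - A) * A⁻¹ := by field_simp
  calc |A⁻¹ - B⁻¹| * B = |(A⁻¹ - B⁻¹) * B| := by rw [abs_mul, abs_of_pos hB]
    _ = |(B - A) * A⁻¹| := by rw [h]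
    _ = |B - A| * A⁻¹ := by rw [abs_mul, abs_of_pos (inv_pos.mpr hA)]

lemma sqrt_two_bound (p q d : ℝ) (hp : 0 ≤ p) (hq : 0 ≤ q) (hd : 0 ≤ d)
    (h : p ^ 2 + q ^ 2 ≤ d ^ 2) : p + q ≤ Real.sqrt 2 * d := by
  have h1 : (p + q) ^ 2 ≤ (Real.sqrt 2 * d) ^ 2 := by
    rw [mul_pow, Real.sq_sqrt (by norm_num : (0:ℝ) ≤ 2)]
    nlinarith [sq_nonneg (p - q)]
  calc p + q = Real.sqrt ((p + q) ^ 2) := (Real.sqrt_sq (by positivity)).symm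
    _ ≤ Real.sqrt ((Real.sqrt 2 * d) ^ 2) := Real.sqrt_le_sqrt h1
    _ = Real.sqrt 2 * d := Real.sqrt_sq (by positivity)

set_option maxHeartbeats 1000000 in
theorem statement7 (n : ℕ) (hn : 2 ≤ n) (σ : ℝ) (hσ : 0 < σ) (rm rp : ℝ)
    (hrm : 0 < rm) (hrmp : rm < rp) (i j : Fin n) (hij : i ≠ j)
    (β : ℝ) (hβ0 : 0 < β) (hβ1 : β < 1) (δ : ℝ) (hδ0 : 0 < δ)
    (hδ : δ ≤ rm * (1 + σ ^ 2) / Real.sqrt 2 * (1 - Real.sqrt (1 - β ^ 2)))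
    (x y : Conf n) (hx : x ∈ AgSet σ rm rp n) (hy : y ∈ AgSet σ rm rp n)
    (hcx : ‖ctr x i - ctr x j‖ = σ * (rad x i + rad x j))
    (hcy : ‖ctr y i - ctr y j‖ = σ * (rad y i + rad y j))
    (hxy : ‖x - y‖ ≤ δ) :
    ⟪nvec σ i j y, nvec σ i j x⟫ ≥ Real.sqrt (1 - β ^ 2) := by
  set c : ℝ := Real.sqrt (1 - β ^ 2) with hcdef
  have hc0 : 0 ≤ c := Real.sqrt_nonneg _
  have hcsq : c ^ 2 = 1 - β ^ 2 := Real.sq_sqrt (by nlinarith)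
  have hc1 : c < 1 := aux_sqrt_lt_one β hβ0 hβ1
  set A : ℝ := σ * (rad x i + rad x j) with hAdef
  set B : ℝ := σ * (rad y i + rad y j) with hBdef
  have hxi := (hx.1 i).1
  have hxj := (hx.1 j).1
  have hyi := (hy.1 i).1
  have hyj := (hy.1 j).1
  rw [div_le_iff₀ hσ] at hxi hxj hyi hyj
  have hArm : 2 * rm ≤ A := aux_two_rm σ rm _ _ hxi hxj
  have hBrm : 2 * rm ≤ B := aux_two_rm σ rm _ _ hyi hyj
  have hA0 : 0 < A := by linarith
  have hB0 : 0 < B := by linarith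
  set a : EuclideanSpace ℝ (Fin 3) := ctr x i - ctr x j with hadef
  set b : EuclideanSpace ℝ (Fin 3) := ctr y i - ctr y j with hbdef
  set ux : EuclideanSpace ℝ (Fin 3) := A⁻¹ • a with huxdef
  set uy : EuclideanSpace ℝ (Fin 3) := B⁻¹ • b with huydef
  have hux : ‖ux‖ = 1 := by
    rw [huxdef, norm_smul, Real.norm_eq_abs, abs_of_pos (inv_pos.mpr hA0), hcx,
      inv_mul_cancel₀ hA0.ne']
  have huy : ‖uy‖ = 1 := by
    rw [huydef, norm_smul, Real.norm_eq_abs, abs_of_pos (inv_pos.mpr hB0), hcy,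
      inv_mul_cancel₀ hB0.ne']
  set T : ℝ := ⟪uy, ux⟫ with hTdef
  set K : ℝ := (1 + σ ^ 2) * (1 - c) with hKdef
  have hK0 : 0 ≤ K := mul_nonneg (by positivity) (by linarith)
  have hδK : δ ≤ rm * K / Real.sqrt 2 := by
    rw [hKdef]; calc δ ≤ rm * (1 + σ ^ 2) / Real.sqrt 2 * (1 - c) := hδ
    _ = rm * ((1 + σ ^ 2) * (1 - c)) / Real.sqrt 2 := by ring
  -- key estimate : 1 - K ≤ T
  have hT : 1 - K ≤ T := by
    by_cases h2K : 2 ≤ K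
    · have habs : |T| ≤ ‖uy‖ * ‖ux‖ := abs_real_inner_le_norm uy ux
      rw [hux, huy] at habs
      have := neg_abs_le T
      linarith [abs_le.mp habs |>.1]
    · push_neg at h2K
      -- component estimates
      set p : ℝ := ‖ctr x i - ctr y i‖ with hpdef
      set q : ℝ := ‖ctr x j - ctr y j‖ with hqdef
      have hcomp : ∀ (k : Fin n), ‖ctr x k - ctr y k‖ ^ 2 ≤ ‖(x - y) k‖ ^ 2 := by
        intro k
        have hk : ctr x k - ctr y k =
            (WithLp.equiv 2 (EuclideanSpace ℝ (Fin 3) × ℝ) ((x - y) k)).1 := rfl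
        rw [hk]
        have h := WithLp.prod_norm_sq_eq_of_L2 ((x - y) k)
        have h2 : (0:ℝ) ≤ ‖((x - y) k).snd‖ ^ 2 := sq_nonneg _
        have : ‖(WithLp.equiv 2 (EuclideanSpace ℝ (Fin 3) × ℝ) ((x - y) k)).1‖
            = ‖((x - y) k).fst‖ := rfl
        rw [this]
        linarith
      have hsum : ‖(x - y) i‖ ^ 2 + ‖(x - y) j‖ ^ 2 ≤ ‖x - y‖ ^ 2 := by
        rw [PiLp.norm_sq_eq_of_L2]
        have hsub : ({i, j} : Finset (Fin n)) ⊆ Finset.univ := Finset.subset_univ _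
        have := Finset.sum_le_sum_of_subset_of_nonneg hsub
          (fun k _ _ => sq_nonneg ‖(x - y) k‖)
        rwa [Finset.sum_pair hij] at this
      have hxyδ : ‖x - y‖ ^ 2 ≤ δ ^ 2 := by
        apply sq_le_sq' _ hxy; linarith [norm_nonneg (x - y)]
      have hpq2 : p ^ 2 + q ^ 2 ≤ δ ^ 2 := by
        have hi := hcomp i
        have hj := hcomp j
        rw [← hpdef] at hi
        rw [← hqdef] at hj
        linarith
      have hp0 : 0 ≤ p := norm_nonneg _
      have hq0 : 0 ≤ q := norm_nonneg _
      have hs2 : Real.sqrt 2 ^ 2 = 2 := Real.sq_sqrt (by norm_num)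
      have hs20 : 0 < Real.sqrt 2 := Real.sqrt_pos.mpr (by norm_num)
      have hpq : p + q ≤ Real.sqrt 2 * δ := sqrt_two_bound p q δ hp0 hq0 hδ0.le hpq2
      have hab : ‖a - b‖ ≤ p + q := by
        rw [hadef, hbdef, show ctr x i - ctr x j - (ctr y i - ctr y j)
          = (ctr x i - ctr y i) - (ctr x j - ctr y j) by abel]
        exact norm_sub_le _ _
      have hBA : |B - A| ≤ ‖a - b‖ := by
        rw [← hcx, ← hcy, norm_sub_rev a b]
        exact abs_norm_sub_norm_le b a
      have hdiff : ux - uy = A⁻¹ • (a - b) + (A⁻¹ - B⁻¹) • b := by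
        rw [smul_sub, sub_smul, huxdef, huydef]; abel
      have hd1 : ‖ux - uy‖ ≤ A⁻¹ * ‖a - b‖ + |A⁻¹ - B⁻¹| * B := by
        rw [hdiff]
        calc ‖A⁻¹ • (a - b) + (A⁻¹ - B⁻¹) • b‖
            ≤ ‖A⁻¹ • (a - b)‖ + ‖(A⁻¹ - B⁻¹) • b‖ := norm_add_le _ _
          _ = A⁻¹ * ‖a - b‖ + |A⁻¹ - B⁻¹| * B := by
              rw [norm_smul, norm_smul, Real.norm_eq_abs, Real.norm_eq_abs,
                abs_of_pos (inv_pos.mpr hA0), hcy]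
      have hd2 : |A⁻¹ - B⁻¹| * B = |B - A| * A⁻¹ := aux_abs A B hA0 hB0
      have hd3 : ‖ux - uy‖ ≤ 2 * ‖a - b‖ * A⁻¹ := by
        rw [hd2] at hd1
        have hAinv : 0 < A⁻¹ := inv_pos.mpr hA0
        have : |B - A| * A⁻¹ ≤ ‖a - b‖ * A⁻¹ := by
          apply mul_le_mul_of_nonneg_right hBA hAinv.le
        calc ‖ux - uy‖ ≤ A⁻¹ * ‖a - b‖ + |B - A| * A⁻¹ := hd1
          _ ≤ A⁻¹ * ‖a - b‖ + ‖a - b‖ * A⁻¹ := by linarith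
          _ = 2 * ‖a - b‖ * A⁻¹ := by ring
      have hd4 : ‖ux - uy‖ ≤ K := by
        have hA2rm : A⁻¹ ≤ (2 * rm)⁻¹ := by
          apply inv_anti₀ (by linarith) hArm
        have hab2 : ‖a - b‖ ≤ Real.sqrt 2 * δ := le_trans hab hpq
        have h1 : 2 * ‖a - b‖ * A⁻¹ ≤ 2 * (Real.sqrt 2 * δ) * (2 * rm)⁻¹ := by
          apply mul_le_mul (by linarith) hA2rm
            (inv_pos.mpr hA0).le (by positivity)
        have h2 : 2 * (Real.sqrt 2 * δ) * (2 * rm)⁻¹ ≤ K := by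
          rw [show 2 * (Real.sqrt 2 * δ) * (2 * rm)⁻¹ = Real.sqrt 2 * δ / rm by
            field_simp]
          rw [div_le_iff₀ hrm]
          calc Real.sqrt 2 * δ ≤ Real.sqrt 2 * (rm * K / Real.sqrt 2) :=
                mul_le_mul_of_nonneg_left hδK hs20.le
            _ = K * rm := by field_simp
        linarith [hd3]
      have hnsq : ‖ux - uy‖ ^ 2 = 2 - 2 * T := by
        have hc : ⟪ux, uy⟫ = T := by rw [hTdef]; exact real_inner_comm uy ux
        rw [norm_sub_sq_real, hux, huy, hc]; ring
      have hKsq : ‖ux - uy‖ ^ 2 ≤ K ^ 2 := pow_le_pow_left₀ (norm_nonneg _) hd4 2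
      have hK2 : K ^ 2 ≤ 2 * K := aux_Ksq K hK0 h2K
      linarith
  -- assemble
  have hW : ⟪wvec σ i j y, wvec σ i j x⟫ = 2 * T + 2 * σ ^ 2 := by
    rw [wvec_inner σ i j hij x y]
  have hs0 : (0:ℝ) ≤ 2 + 2 * σ ^ 2 := by positivity
  have hssq : Real.sqrt (2 + 2 * σ ^ 2) ^ 2 = 2 + 2 * σ ^ 2 := Real.sq_sqrt hs0
  have hspos : 0 < Real.sqrt (2 + 2 * σ ^ 2) := Real.sqrt_pos.mpr (by positivity)
  have hval : ⟪nvec σ i j y, nvec σ i j x⟫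
      = (Real.sqrt (2 + 2 * σ ^ 2))⁻¹ * ((Real.sqrt (2 + 2 * σ ^ 2))⁻¹
        * (2 * T + 2 * σ ^ 2)) := by
    rw [nvec, nvec, real_inner_smul_left, real_inner_smul_right, hW]
  rw [hval, ge_iff_le]
  have hKc : 2 * T + 2 * σ ^ 2 ≥ c * (2 + 2 * σ ^ 2) := by
    have h1 : 1 - K = c * (1 + σ ^ 2) - σ ^ 2 := by rw [hKdef]; ring
    have h2 : c * (1 + σ ^ 2) - σ ^ 2 ≤ T := by rw [← h1]; exact hT
    have h3 : c * (2 + 2 * σ ^ 2) = 2 * (c * (1 + σ ^ 2) - σ ^ 2) + 2 * σ ^ 2 := by ring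
    linarith
  calc c = (Real.sqrt (2 + 2 * σ ^ 2))⁻¹ * ((Real.sqrt (2 + 2 * σ ^ 2))⁻¹
        * (c * (2 + 2 * σ ^ 2))) := by
        rw [← hssq]; field_simp
        rw [Real.sq_sqrt (sq_nonneg _)]
    _ ≤ (Real.sqrt (2 + 2 * σ ^ 2))⁻¹ * ((Real.sqrt (2 + 2 * σ ^ 2))⁻¹
        * (2 * T + 2 * σ ^ 2)) := by
        apply mul_le_mul_of_nonneg_left _ (inv_pos.mpr hspos).le
        apply mul_le_mul_of_nonneg_left hKc (inv_pos.mpr hspos).le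
end

section
/- (Compatibility between the boundaries.) Let n ≥ 2 be an integer, σ > 0, 0 < r_- < r_+, and set β₀ = r_- / (4 r_+ max(σ,1) n^{3/2}). For every 𝐱 ∈ 𝒜_g^σ such that at least one constraint is active (i.e. |x_i−x_j| = σ(x̌_i+x̌_j) for some i ≠ j, or x̌_i = r_+/σ for some i, or x̌_i = r_- /σ for some i), there exists a nonzero vector 𝐯 ∈ (ℝ³×ℝ)^n such that: (a) for every pair i ≠ j with |x_i−x_j| = σ(x̌_i+x̌_j), ⟨𝐯, 𝐧_{ij}(𝐱)⟩ ≥ β₀‖𝐯‖; (b) for every i with x̌_i = r_+/σ, −v̌_i ≥ β₀‖𝐯‖; (c) for every i with x̌_i = r_- /σ, v̌_i ≥ β₀‖𝐯‖. -/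
open scoped RealInnerProductSpace

section helpers

lemma inner_glob (g h : Glob) :
    ⟪g, h⟫ = ⟪(WithLp.equiv 2 _ g).1, (WithLp.equiv 2 _ h).1⟫
      + (WithLp.equiv 2 _ g).2 * (WithLp.equiv 2 _ h).2 := by
  rw [WithLp.prod_inner_apply]; simp [RCLike.inner_apply, mul_comm]

lemma inner_wvec (σ : ℝ) {n : ℕ} (i j : Fin n) (hij : i ≠ j) (x v : Conf n) :
    ⟪v, wvec σ i j x⟫ =
      (σ * (rad x i + rad x j))⁻¹ * ⟪ctr v i - ctr v j, ctr x i - ctr x j⟫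
        - σ * (rad v i + rad v j) := by
  rw [PiLp.inner_apply]
  have hsub : ({i, j} : Finset (Fin n)) ⊆ Finset.univ := Finset.subset_univ _
  rw [← Finset.sum_subset hsub (fun k _ hk => by
    simp only [Finset.mem_insert, Finset.mem_singleton, not_or] at hk
    rw [inner_glob]
    simp [wvec, hk.1, hk.2])]
  rw [Finset.sum_pair hij]
  rw [inner_glob, inner_glob]
  simp only [wvec, PiLp.toLp_apply, if_pos rfl,
    if_neg hij, if_neg (Ne.symm hij)]
  simp only [if_true, true_or, or_true, Equiv.apply_symm_apply]
  rw [inner_smul_right, inner_smul_right, inner_sub_left]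
  rw [show ctr x j - ctr x i = -(ctr x i - ctr x j) by abel, inner_neg_right]
  simp only [ctr, rad]
  ring

lemma glob_norm_sq_s8 (g : Glob) :
    ‖g‖ ^ 2 = ‖(WithLp.equiv 2 (EuclideanSpace ℝ (Fin 3) × ℝ) g).1‖ ^ 2
      + ((WithLp.equiv 2 (EuclideanSpace ℝ (Fin 3) × ℝ) g).2) ^ 2 := by
  simpa using WithLp.prod_norm_sq_eq_of_L2 g

lemma conf_norm_sq {n : ℕ} (v : Conf n) : ‖v‖ ^ 2 = ∑ k, ‖v k‖ ^ 2 := by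
  simpa using PiLp.norm_sq_eq_of_L2 _ v

lemma walk_bound {n : ℕ} (σ rp : ℝ) (hσ : 0 < σ) (x : Conf n)
    (hrad : ∀ i, rad x i ≤ rp / σ) (G : SimpleGraph (Fin n))
    (hG : ∀ a b : Fin n, G.Adj a b → ‖ctr x a - ctr x b‖ = σ * (rad x a + rad x b))
    {a b : Fin n} (p : G.Walk a b) :
    ‖ctr x a - ctr x b‖ ≤ 2 * rp * p.length := by
  induction p with
  | nil => simp
  | @cons u c w h p ih =>
      have h1 : ‖ctr x u - ctr x c‖ ≤ 2 * rp := by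
        rw [hG _ _ h]
        have := hrad u; have := hrad c
        have : σ * (rad x u + rad x c) ≤ σ * (rp / σ + rp / σ) := by
          apply mul_le_mul_of_nonneg_left (by linarith) hσ.le
        calc σ * (rad x u + rad x c) ≤ σ * (rp / σ + rp / σ) := this
          _ = 2 * rp := by field_simp; ring
      calc ‖ctr x u - ctr x w‖ ≤ ‖ctr x u - ctr x c‖ + ‖ctr x c - ctr x w‖ :=
            norm_sub_le_norm_sub_add_norm_sub _ _ _
        _ ≤ 2 * rp + 2 * rp * p.length := by gcongr
        _ = 2 * rp * (p.length + 1) := by ring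
        _ = 2 * rp * (SimpleGraph.Walk.cons h p).length := by
            rw [SimpleGraph.Walk.length_cons]; push_cast; ring

end helpers

set_option maxHeartbeats 4000000 in
theorem statement8 (n : ℕ) (hn : 2 ≤ n) (σ : ℝ) (hσ : 0 < σ) (rm rp : ℝ)
    (hrm : 0 < rm) (hrmp : rm < rp)
    (x : Conf n) (hx : x ∈ AgSet σ rm rp n)
    (hactive :
      (∃ i j : Fin n, i ≠ j ∧ ‖ctr x i - ctr x j‖ = σ * (rad x i + rad x j)) ∨
      (∃ i : Fin n, rad x i = rp / σ) ∨ (∃ i : Fin n, rad x i = rm / σ)) :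
    ∃ v : Conf n, v ≠ 0 ∧
      (∀ i j : Fin n, i ≠ j → ‖ctr x i - ctr x j‖ = σ * (rad x i + rad x j) →
        ⟪v, nvec σ i j x⟫ ≥ rm / (4 * rp * max σ 1 * (n : ℝ) ^ ((3 : ℝ) / 2)) * ‖v‖) ∧
      (∀ i : Fin n, rad x i = rp / σ →
        -rad v i ≥ rm / (4 * rp * max σ 1 * (n : ℝ) ^ ((3 : ℝ) / 2)) * ‖v‖) ∧
      (∀ i : Fin n, rad x i = rm / σ →
        rad v i ≥ rm / (4 * rp * max σ 1 * (n : ℝ) ^ ((3 : ℝ) / 2)) * ‖v‖) := by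
  classical
  obtain ⟨hxr, hxd⟩ := hx
  have hrp : 0 < rp := hrm.trans hrmp
  have hσ0 : σ ≠ 0 := ne_of_gt hσ
  obtain ⟨M, hMdef⟩ : ∃ y : ℝ, y = max σ 1 := ⟨_, rfl⟩
  have hM1 : (1 : ℝ) ≤ M := by rw [hMdef]; exact le_max_right _ _
  have hMσ : σ ≤ M := by rw [hMdef]; exact le_max_left _ _
  have hM0 : (0 : ℝ) < M := lt_of_lt_of_le one_pos hM1
  obtain ⟨N, hNdef⟩ : ∃ y : ℝ, y = (n : ℝ) := ⟨_, rfl⟩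
  have hN : (2 : ℝ) ≤ N := by rw [hNdef]; exact_mod_cast hn
  have hN0 : (0 : ℝ) < N := by linarith
  obtain ⟨δ, hδdef⟩ : ∃ y : ℝ, y = rm * (2 * N - 1) / (4 * M * N) := ⟨_, rfl⟩
  have hδ0 : 0 < δ := by
    rw [hδdef]
    apply div_pos (by nlinarith) (by positivity)
  have hδ1 : 4 * M * N * δ = rm * (2 * N - 1) := by
    rw [hδdef]; field_simp
  have hδle : δ ≤ rm / 2 := by
    rw [hδdef, div_le_div_iff₀ (by positivity) (by norm_num)]
    nlinarith [mul_nonneg (mul_nonneg hrm.le (by linarith : (0:ℝ) ≤ N)) (by linarith : (0:ℝ) ≤ M - 1)]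
  obtain ⟨ε, hεdef⟩ : ∃ y : ℝ, y = 2 * σ * δ / (rp - rm) := ⟨_, rfl⟩
  have hε0 : 0 < ε := by
    rw [hεdef]
    exact div_pos (by positivity) (by linarith)
  have hεδ : ε * (rp - rm) = 2 * σ * δ := by
    rw [hεdef]
    exact div_mul_cancel₀ _ (by linarith : rp - rm ≠ 0)
  obtain ⟨m0, hm0def⟩ : ∃ y : ℝ, y = (rm + rp) / (2 * σ) := ⟨_, rfl⟩
  -- the contact graph
  set G : SimpleGraph (Fin n) :=
    { Adj := fun i j => i ≠ j ∧ ‖ctr x i - ctr x j‖ = σ * (rad x i + rad x j),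
      symm := by
        refine ⟨fun a b h => ?_⟩
        refine ⟨h.1.symm, ?_⟩
        rw [norm_sub_rev, h.2, add_comm]
      loopless := ⟨fun a h => h.1 rfl⟩ } with hGdef
  set c : Fin n → Fin n := fun i => (G.connectedComponentMk i).out with hcdef
  have hreach : ∀ i, G.Reachable i (c i) := by
    intro i
    apply SimpleGraph.ConnectedComponent.exact
    rw [hcdef]
    exact (G.connectedComponentMk i).out_eq.symm
  have hceq : ∀ i j : Fin n, G.Adj i j → c i = c j := by
    intro i j h
    rw [hcdef]
    simp only []
    rw [SimpleGraph.ConnectedComponent.connectedComponentMk_eq_of_adj h]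
  -- the vector v
  obtain ⟨v, hvdef⟩ : ∃ v : Conf n, v = (WithLp.toLp 2 fun k =>
    (WithLp.equiv 2 (EuclideanSpace ℝ (Fin 3) × ℝ)).symm
      (ctr x k - ctr x (c k), ε * (m0 - rad x k)) : Conf n) := ⟨_, rfl⟩
  have hvc : ∀ k, ctr v k = ctr x k - ctr x (c k) := by
    intro k; rw [hvdef]; simp [ctr]
  have hvr : ∀ k, rad v k = ε * (m0 - rad x k) := by
    intro k; rw [hvdef]; simp [rad]
  -- radius component bounds
  have hradb : ∀ k, |rad v k| ≤ δ := by
    intro k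
    rw [hvr, abs_mul, abs_of_pos hε0]
    have e1 : (rm + rp) / (2 * σ) - rp / σ = -((rp - rm) / (2 * σ)) := by
      field_simp; ring
    have e2 : (rm + rp) / (2 * σ) - rm / σ = (rp - rm) / (2 * σ) := by
      field_simp; ring
    have h1 : |m0 - rad x k| ≤ (rp - rm) / (2 * σ) := by
      rw [abs_le, hm0def]
      refine ⟨?_, ?_⟩
      · have := (hxr k).2; linarith
      · have := (hxr k).1; linarith
    have h2 : ε * |m0 - rad x k| ≤ ε * ((rp - rm) / (2 * σ)) :=
      mul_le_mul_of_nonneg_left h1 hε0.le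
    have h3 : ε * ((rp - rm) / (2 * σ)) = δ := by
      rw [mul_div_assoc', hεδ, mul_comm, mul_div_assoc,
        div_self (by positivity : (2:ℝ) * σ ≠ 0), mul_one]
    linarith
  -- center component bounds
  have hctrb : ∀ k, ‖ctr v k‖ ≤ 2 * rp * (N - 1) := by
    intro k
    rw [hvc]
    obtain ⟨p⟩ := hreach k
    have hb := walk_bound σ rp hσ x (fun i => (hxr i).2) G (fun a b h => h.2) p.toPath.1
    have hlen : (p.toPath.1.length : ℝ) ≤ N - 1 := by
      have := p.toPath.2.length_lt
      rw [Fintype.card_fin] at this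
      have : p.toPath.1.length ≤ n - 1 := Nat.le_sub_one_of_lt this
      calc ((p.toPath.1.length : ℕ) : ℝ) ≤ ((n - 1 : ℕ) : ℝ) := by exact_mod_cast this
        _ = N - 1 := by
            rw [hNdef, Nat.cast_sub (by omega)]; norm_num
    calc ‖ctr x k - ctr x (c k)‖ ≤ 2 * rp * p.toPath.1.length := hb
      _ ≤ 2 * rp * (N - 1) := by
          apply mul_le_mul_of_nonneg_left hlen (by linarith : (0:ℝ) ≤ 2 * rp)
  -- norm bound for v
  obtain ⟨A, hAdef⟩ : ∃ y : ℝ, y = 2 * rp * (N - 1) := ⟨_, rfl⟩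
  have hA0 : 0 ≤ A := by rw [hAdef]; nlinarith
  have hnormv : ‖v‖ ≤ Real.sqrt N * (A + δ) := by
    have hsq : ‖v‖ ^ 2 ≤ N * (A + δ) ^ 2 := by
      rw [conf_norm_sq]
      have hk : ∀ k : Fin n, ‖v k‖ ^ 2 ≤ (A + δ) ^ 2 := by
        intro k
        rw [glob_norm_sq_s8]
        have h1 : ‖(WithLp.equiv 2 (EuclideanSpace ℝ (Fin 3) × ℝ) (v k)).1‖ ≤ A := by
          rw [hAdef]; exact hctrb k
        have h2 : |(WithLp.equiv 2 (EuclideanSpace ℝ (Fin 3) × ℝ) (v k)).2| ≤ δ := hradb k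
        have h1' : ‖(WithLp.equiv 2 (EuclideanSpace ℝ (Fin 3) × ℝ) (v k)).1‖ ^ 2 ≤ A ^ 2 := by
          nlinarith [norm_nonneg (WithLp.equiv 2 (EuclideanSpace ℝ (Fin 3) × ℝ) (v k)).1]
        have h2' : ((WithLp.equiv 2 (EuclideanSpace ℝ (Fin 3) × ℝ) (v k)).2) ^ 2 ≤ δ ^ 2 :=
          sq_le_sq' (by cases abs_le.1 h2; linarith) (by cases abs_le.1 h2; linarith)
        nlinarith
      calc ∑ k, ‖v k‖ ^ 2 ≤ ∑ _k : Fin n, (A + δ) ^ 2 := Finset.sum_le_sum (fun k _ => hk k)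
        _ = N * (A + δ) ^ 2 := by
            rw [Finset.sum_const, Finset.card_univ, Fintype.card_fin, nsmul_eq_mul, hNdef]
    have h0 : 0 ≤ A + δ := by linarith
    calc ‖v‖ = Real.sqrt (‖v‖ ^ 2) := (Real.sqrt_sq (norm_nonneg v)).symm
      _ ≤ Real.sqrt (N * (A + δ) ^ 2) := Real.sqrt_le_sqrt hsq
      _ = Real.sqrt N * (A + δ) := by
          rw [Real.sqrt_mul hN0.le, Real.sqrt_sq h0]
  -- the budget bound
  obtain ⟨B, hBdef⟩ : ∃ y : ℝ, y = rm / (4 * rp * M * N ^ ((3 : ℝ) / 2)) := ⟨_, rfl⟩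
  have hrpow : N ^ ((3 : ℝ) / 2) = N * Real.sqrt N := by
    rw [show (3 : ℝ) / 2 = 1 + 1 / 2 by norm_num, Real.rpow_add hN0,
      Real.rpow_one, ← Real.sqrt_eq_rpow]
  have hsqrtN0 : 0 < Real.sqrt N := Real.sqrt_pos.2 hN0
  have hden : (0:ℝ) < 4 * rp * M * (N * Real.sqrt N) :=
    mul_pos (mul_pos (mul_pos (by norm_num) hrp) hM0) (mul_pos hN0 hsqrtN0)
  have hden2 : (0:ℝ) < 4 * rp * M * N :=
    mul_pos (mul_pos (mul_pos (by norm_num) hrp) hM0) hN0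
  have hB0 : 0 < B := by
    rw [hBdef, hrpow]
    exact div_pos hrm hden
  have hBv : B * ‖v‖ ≤ rm * (A + δ) / (4 * rp * M * N) := by
    have h1 : B * ‖v‖ ≤ B * (Real.sqrt N * (A + δ)) :=
      mul_le_mul_of_nonneg_left hnormv hB0.le
    have h2 : B * (Real.sqrt N * (A + δ)) = rm * (A + δ) / (4 * rp * M * N) := by
      rw [hBdef, hrpow, div_mul_eq_mul_div, div_eq_div_iff hden.ne' hden2.ne']
      ring
    linarith
  -- key arithmetic: budget vs δ
  have hkey1 : rm * (A + δ) / (4 * rp * M * N) ≤ δ := by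
    rw [div_le_iff₀ hden2]
    have e : δ * (4 * rp * M * N) = rp * (4 * M * N * δ) := by ring
    rw [e, hδ1, hAdef]
    nlinarith [mul_le_mul_of_nonneg_left hδle hrm.le, mul_lt_mul_of_pos_left hrmp hrm,
      mul_pos hrm hN0]
  -- the inner product with wvec for active pairs
  have hwkey : ∀ i j : Fin n, i ≠ j → ‖ctr x i - ctr x j‖ = σ * (rad x i + rad x j) →
      ⟪v, wvec σ i j x⟫ ≥ 2 * rm - 2 * M * δ := by
    intro i j hij hact
    have hcij : c i = c j := hceq i j ⟨hij, hact⟩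
    have hdij : ctr v i - ctr v j = ctr x i - ctr x j := by
      rw [hvc, hvc, hcij]; abel
    have ht2 : 2 * rm ≤ σ * (rad x i + rad x j) := by
      have h1 := (hxr i).1; have h2 := (hxr j).1
      have h4 : σ * (rm / σ + rm / σ) ≤ σ * (rad x i + rad x j) := by
        apply mul_le_mul_of_nonneg_left (by linarith) hσ.le
      calc 2 * rm = σ * (rm / σ + rm / σ) := by field_simp; ring
        _ ≤ σ * (rad x i + rad x j) := h4
    have ht0 : 0 < σ * (rad x i + rad x j) := by linarith
    rw [inner_wvec σ i j hij x v, hdij, real_inner_self_eq_norm_sq, hact]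
    rw [pow_two, ← mul_assoc, inv_mul_cancel₀ ht0.ne', one_mul, hvr, hvr]
    have e2 : σ * (ε * (m0 - rad x i) + ε * (m0 - rad x j))
        = ε * (rm + rp - σ * (rad x i + rad x j)) := by
      rw [hm0def]
      field_simp
      ring
    rw [e2]
    have h3 : ε * (rp - rm) ≤ 2 * M * δ := by
      rw [hεδ]; nlinarith
    nlinarith [mul_le_mul_of_nonneg_left ht2 hε0.le]
  have h2Mδ : 2 * M * δ ≤ rm := by nlinarith
  -- pair goal arithmetic
  have hkey2 : rm * (A + δ) / (4 * rp * M * N) ≤ (2 * rm - 2 * M * δ) / Real.sqrt (2 + 2 * σ ^ 2) := by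
    have hs0 : 0 < Real.sqrt (2 + 2 * σ ^ 2) := Real.sqrt_pos.2 (by positivity)
    have hsle : Real.sqrt (2 + 2 * σ ^ 2) ≤ 2 * M := by
      rw [show (2 : ℝ) * M = Real.sqrt ((2 * M) ^ 2) by rw [Real.sqrt_sq (by positivity)]]
      apply Real.sqrt_le_sqrt
      nlinarith
    have hstep : (2 * rm - 2 * M * δ) / (2 * M) ≤ (2 * rm - 2 * M * δ) / Real.sqrt (2 + 2 * σ ^ 2) := by
      apply div_le_div_of_nonneg_left (by linarith) hs0 hsle
    refine le_trans ?_ hstep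
    have hδ2 : rp * (4 * M * N * δ) = rp * (rm * (2 * N - 1)) := by rw [hδ1]
    have hmain : rm * (A + δ) ≤ (2 * rm - 2 * M * δ) * (2 * rp * N) := by
      rw [hAdef]
      nlinarith [hδ2, mul_le_mul_of_nonneg_left hδle hrm.le,
        mul_lt_mul_of_pos_left hrmp hrm, mul_pos hrm hN0]
    rw [div_le_div_iff₀ hden2 (by linarith : (0:ℝ) < 2 * M)]
    nlinarith [mul_le_mul_of_nonneg_right hmain (by linarith : (0:ℝ) ≤ 2 * M)]
  -- parts (b) and (c) values
  have hup : ∀ i : Fin n, rad x i = rp / σ → -rad v i = δ := by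
    intro i hi
    rw [hvr, hi, hm0def]
    have : (rm + rp) / (2 * σ) - rp / σ = -((rp - rm) / (2 * σ)) := by field_simp; ring
    rw [this]
    have h3 : ε * ((rp - rm) / (2 * σ)) = δ := by
      rw [mul_div_assoc', hεδ, mul_comm, mul_div_assoc,
        div_self (by positivity : (2:ℝ) * σ ≠ 0), mul_one]
    rw [mul_neg]
    linarith
  have hlow : ∀ i : Fin n, rad x i = rm / σ → rad v i = δ := by
    intro i hi
    rw [hvr, hi, hm0def]
    have : (rm + rp) / (2 * σ) - rm / σ = (rp - rm) / (2 * σ) := by field_simp; ring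
    rw [this]
    rw [mul_div_assoc', hεδ, mul_comm, mul_div_assoc,
      div_self (by positivity : (2:ℝ) * σ ≠ 0), mul_one]
  have hBeq : rm / (4 * rp * max σ 1 * (n : ℝ) ^ ((3 : ℝ) / 2)) = B := by
    rw [hBdef, hMdef, hNdef]
  -- assemble
  refine ⟨v, ?_, ?_, ?_, ?_⟩
  · -- v ≠ 0
    intro hv0
    rcases hactive with ⟨i, j, hij, hact⟩ | ⟨i, hi⟩ | ⟨i, hi⟩
    · have := hwkey i j hij hact
      rw [hv0, inner_zero_left] at this
      nlinarith
    · have := hup i hi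
      rw [hv0] at this
      have hz : rad (0 : Conf n) i = 0 := by simp [rad]
      rw [hz] at this
      linarith
    · have := hlow i hi
      rw [hv0] at this
      have hz : rad (0 : Conf n) i = 0 := by simp [rad]
      rw [hz] at this
      linarith
  · -- (a)
    intro i j hij hact
    rw [hBeq]
    have hw := hwkey i j hij hact
    have hs0 : 0 < Real.sqrt (2 + 2 * σ ^ 2) := Real.sqrt_pos.2 (by positivity)
    have hnv : ⟪v, nvec σ i j x⟫ = (Real.sqrt (2 + 2 * σ ^ 2))⁻¹ * ⟪v, wvec σ i j x⟫ := by
      rw [nvec, real_inner_smul_right]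
    rw [ge_iff_le, hnv]
    calc B * ‖v‖ ≤ rm * (A + δ) / (4 * rp * M * N) := hBv
      _ ≤ (2 * rm - 2 * M * δ) / Real.sqrt (2 + 2 * σ ^ 2) := hkey2
      _ ≤ ⟪v, wvec σ i j x⟫ / Real.sqrt (2 + 2 * σ ^ 2) := by
          exact div_le_div_of_nonneg_right hw hs0.le
      _ = (Real.sqrt (2 + 2 * σ ^ 2))⁻¹ * ⟪v, wvec σ i j x⟫ := by
          rw [div_eq_inv_mul]
  · -- (b)
    intro i hi
    rw [hBeq, ge_iff_le, hup i hi]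
    calc B * ‖v‖ ≤ rm * (A + δ) / (4 * rp * M * N) := hBv
      _ ≤ δ := hkey1
  · -- (c)
    intro i hi
    rw [hBeq, ge_iff_le, hlow i hi]
    calc B * ‖v‖ ≤ rm * (A + δ) / (4 * rp * M * N) := hBv
      _ ≤ δ := hkey1
end

section
/- Let M ≥ 2 be an integer, 0 < r_- < r_+, and 0 < ε ≤ 1. Then for every measurable function g : ℝ³×ℝ → [0,∞], ∫_{(ℝ³×ℝ)^M} g(x_1, x̌_1) · Π_{i=1}^{M} 1_{[r_-,r_+]}(x̌_i) · Π_{i=2}^{M} 1_{{ x̌_{i−1}+x̌_i ≤ |x_i − x_{i−1}| ≤ x̌_{i−1}+x̌_i+ε }} dx_1 dx̌_1 ⋯ dx_M dx̌_M ≤ ( ∫_{ℝ³×[r_-,r_+]} g(x,x̌) dx dx̌ ) · ( 4π(2r_+ + 1)²(r_+ − r_-) ε )^{M−1}. -/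
open MeasureTheory
open scoped ENNReal

/-- A globule: a center in `ℝ³` and a radius in `ℝ`. -/
abbrev E3R : Type := EuclideanSpace ℝ (Fin 3) × ℝ

/-- The index `i - 1` in `Fin M` (equal to `i` itself when `i = 0`). -/
def prev {M : ℕ} (i : Fin M) : Fin M :=
  ⟨i.val - 1, Nat.lt_of_le_of_lt (Nat.sub_le _ _) i.isLt⟩


noncomputable section


abbrev E3 : Type := EuclideanSpace ℝ (Fin 3)

lemma gamma52 : Real.Gamma ((3 : ℕ) / 2 + 1) = 3 / 4 * Real.sqrt Real.pi := by
  have h1 : ((3 : ℕ) : ℝ) / 2 + 1 = 3 / 2 + 1 := by norm_num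
  rw [h1, Real.Gamma_add_one (by norm_num)]
  have h2 : (3 : ℝ) / 2 = 1 / 2 + 1 := by norm_num
  rw [h2, Real.Gamma_add_one (by norm_num), Real.Gamma_one_half_eq]
  ring

lemma const3 : Real.sqrt Real.pi ^ 3 / Real.Gamma ((3 : ℕ) / 2 + 1) = 4 / 3 * Real.pi := by
  rw [gamma52]
  have hsq : Real.sqrt Real.pi ^ 3 = Real.pi * Real.sqrt Real.pi := by
    have h : Real.sqrt Real.pi ^ 3 = Real.sqrt Real.pi ^ 2 * Real.sqrt Real.pi := by ring
    rw [h, Real.sq_sqrt Real.pi_pos.le]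
  have hs0 : Real.sqrt Real.pi ≠ 0 := by positivity
  rw [hsq]; field_simp

lemma vol_closedBall3 (c : E3) (r : ℝ) (hr : 0 ≤ r) :
    volume (Metric.closedBall c r) = ENNReal.ofReal (4 / 3 * Real.pi * r ^ 3) := by
  rw [EuclideanSpace.volume_closedBall]
  have hcard : (Fintype.card (Fin 3)) = 3 := by simp
  rw [hcard, const3, ← ENNReal.ofReal_pow hr, ← ENNReal.ofReal_mul (by positivity)]
  ring_nf

lemma vol_ball3 (c : E3) (r : ℝ) (hr : 0 ≤ r) :
    volume (Metric.ball c r) = ENNReal.ofReal (4 / 3 * Real.pi * r ^ 3) := by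
  rw [EuclideanSpace.volume_ball]
  have hcard : (Fintype.card (Fin 3)) = 3 := by simp
  rw [hcard, const3, ← ENNReal.ofReal_pow hr, ← ENNReal.ofReal_mul (by positivity)]
  ring_nf

lemma shell_vol (c : E3) (R ε : ℝ) (hR : 0 ≤ R) (hε : 0 ≤ ε) :
    volume {x : E3 | ‖x - c‖ ∈ Set.Icc R (R + ε)} ≤
      ENNReal.ofReal (4 * Real.pi * (R + ε) ^ 2 * ε) := by
  have hsub : {x : E3 | ‖x - c‖ ∈ Set.Icc R (R + ε)} ⊆
      Metric.closedBall c (R + ε) \ Metric.ball c R := by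
    intro x hx
    obtain ⟨h1, h2⟩ := hx
    refine ⟨?_, ?_⟩
    · rw [Metric.mem_closedBall, dist_eq_norm]; exact h2
    · rw [Metric.mem_ball, dist_eq_norm]; exact not_lt.mpr h1
  refine le_trans (measure_mono hsub) ?_
  rw [measure_diff (Metric.ball_subset_closedBall.trans
        (Metric.closedBall_subset_closedBall (by linarith)))
      measurableSet_ball.nullMeasurableSet measure_ball_lt_top.ne]
  rw [vol_closedBall3 c (R + ε) (by linarith), vol_ball3 c R hR,
    ← ENNReal.ofReal_sub _ (by positivity)]
  refine ENNReal.ofReal_le_ofReal ?_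
  have key : (R + ε) ^ 3 - R ^ 3 ≤ 3 * (R + ε) ^ 2 * ε := by nlinarith [sq_nonneg R, sq_nonneg ε, mul_nonneg hR hε, mul_nonneg (mul_nonneg hR hR) hε, mul_nonneg (mul_nonneg hR hε) hε]
  nlinarith [mul_le_mul_of_nonneg_left key Real.pi_pos.le, Real.pi_pos]
open MeasureTheory Set
open scoped ENNReal

noncomputable section


def aInd (rm rp t : ℝ) : ℝ≥0∞ := if t ∈ Set.Icc rm rp then 1 else 0

def sInd (ε : ℝ) (y x : E3R) : ℝ≥0∞ :=
  if ‖x.1 - y.1‖ ∈ Set.Icc (y.2 + x.2) (y.2 + x.2 + ε) then 1 else 0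

def KK (rm rp ε : ℝ) (y x : E3R) : ℝ≥0∞ := aInd rm rp y.2 * (aInd rm rp x.2 * sInd ε y x)

lemma aInd_cases (rm rp t : ℝ) : aInd rm rp t = 0 ∨ aInd rm rp t = 1 := by
  unfold aInd; split <;> simp

lemma measurable_aInd (rm rp : ℝ) : Measurable (aInd rm rp) := by
  unfold aInd
  exact Measurable.ite measurableSet_Icc measurable_const measurable_const

lemma measurable_sInd (ε : ℝ) : Measurable fun p : E3R × E3R => sInd ε p.1 p.2 := by
  unfold sInd
  refine Measurable.ite ?_ measurable_const measurable_const
  have h1 : Measurable fun p : E3R × E3R => ‖p.2.1 - p.1.1‖ :=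
    ((measurable_fst.comp measurable_snd).sub (measurable_fst.comp measurable_fst)).norm
  have h2 : Measurable fun p : E3R × E3R => p.1.2 + p.2.2 :=
    (measurable_snd.comp measurable_fst).add (measurable_snd.comp measurable_snd)
  have : {p : E3R × E3R | ‖p.2.1 - p.1.1‖ ∈ Set.Icc (p.1.2 + p.2.2) (p.1.2 + p.2.2 + ε)}
      = {p | p.1.2 + p.2.2 ≤ ‖p.2.1 - p.1.1‖} ∩ {p | ‖p.2.1 - p.1.1‖ ≤ p.1.2 + p.2.2 + ε} := by
    ext p; simp [Set.mem_Icc, Set.mem_inter_iff]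
  rw [this]
  exact (measurableSet_le h2 h1).inter (measurableSet_le h1 (h2.add_const ε))

lemma measurable_KK (rm rp ε : ℝ) : Measurable fun p : E3R × E3R => KK rm rp ε p.1 p.2 := by
  unfold KK
  exact (((measurable_aInd rm rp).comp (measurable_snd.comp measurable_fst)).mul
    (((measurable_aInd rm rp).comp (measurable_snd.comp measurable_snd)).mul
      (measurable_sInd ε)))

lemma measurable_KK2 (rm rp ε : ℝ) (y : E3R) : Measurable (KK rm rp ε y) :=
  (measurable_KK rm rp ε).comp (measurable_const.prodMk measurable_id)

-- key bound
lemma KK_bound (rm rp ε : ℝ) (hrm : 0 < rm) (hrmp : rm < rp) (hε0 : 0 < ε) (hε1 : ε ≤ 1)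
    (y : E3R) :
    ∫⁻ x : E3R, KK rm rp ε y x ≤
      ENNReal.ofReal (4 * Real.pi * (2 * rp + 1) ^ 2 * (rp - rm) * ε) := by
  unfold KK
  by_cases hy : y.2 ∈ Set.Icc rm rp
  case neg =>
    simp only [aInd, if_neg hy, zero_mul, lintegral_zero]
    exact zero_le
  case pos =>
    simp only [aInd, if_pos hy, one_mul]
    rw [Measure.volume_eq_prod, lintegral_prod_symm']
    swap
    · exact ((measurable_aInd rm rp).comp measurable_snd).mul
        ((measurable_sInd ε).comp (measurable_const.prodMk measurable_id))
    -- now: ∫⁻ t, ∫⁻ c, (if t ∈ Icc then 1 else 0) * sInd ε y (c, t)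
    have hB : ∀ t : ℝ, (∫⁻ c : EuclideanSpace ℝ (Fin 3),
        (if ((c, t) : E3R).2 ∈ Set.Icc rm rp then (1:ℝ≥0∞) else 0) * sInd ε y (c, t)) ≤
        aInd rm rp t *
          ENNReal.ofReal (4 * Real.pi * (2 * rp + 1) ^ 2 * ε) := by
      intro t
      by_cases ht : t ∈ Set.Icc rm rp
      · simp only [aInd, if_pos ht, one_mul]
        have heq : ∀ c, sInd ε y (c, t) =
            {c : EuclideanSpace ℝ (Fin 3) |
              ‖c - y.1‖ ∈ Set.Icc (y.2 + t) (y.2 + t + ε)}.indicator 1 c := by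
          intro c
          simp only [sInd, Set.indicator_apply, Set.mem_setOf_eq, Pi.one_apply]
        rw [lintegral_congr heq, lintegral_indicator_one]
        · refine le_trans (shell_vol y.1 (y.2 + t) ε (by linarith [hy.1, ht.1]) hε0.le) ?_
          refine ENNReal.ofReal_le_ofReal ?_
          have h1 : y.2 + t + ε ≤ 2 * rp + 1 := by linarith [hy.2, ht.2]
          have h2 : 0 ≤ y.2 + t + ε := by linarith [hy.1, ht.1, hrm.le]
          exact mul_le_mul_of_nonneg_right
            (mul_le_mul_of_nonneg_left (pow_le_pow_left₀ h2 h1 2) (by positivity)) hε0.le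
        · have : {c : EuclideanSpace ℝ (Fin 3) |
              ‖c - y.1‖ ∈ Set.Icc (y.2 + t) (y.2 + t + ε)} =
              (fun c => ‖c - y.1‖) ⁻¹' Set.Icc (y.2 + t) (y.2 + t + ε) := rfl
          rw [this]
          exact ((measurable_id.sub measurable_const).norm) measurableSet_Icc
      · simp only [aInd, if_neg ht, zero_mul, lintegral_zero, le_refl]
    refine le_trans (lintegral_mono hB) ?_
    rw [lintegral_mul_const _ (measurable_aInd rm rp)]
    have : (∫⁻ t : ℝ, aInd rm rp t) = ENNReal.ofReal (rp - rm) := by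
      unfold aInd
      have heq : ∀ t : ℝ, (if t ∈ Set.Icc rm rp then (1:ℝ≥0∞) else 0) =
          (Set.Icc rm rp).indicator 1 t := by
        intro t; simp [Set.indicator]
      rw [lintegral_congr heq, lintegral_indicator_one measurableSet_Icc,
        Real.volume_Icc]
    rw [this, ← ENNReal.ofReal_mul (by linarith)]
    refine le_of_eq ?_
    congr 1
    ring

lemma measurable_chainA (rm rp ε : ℝ) (h : E3R → ℝ≥0∞) (hh : Measurable h) (m : ℕ) :
    Measurable fun x : Fin (m + 1) → E3R =>
      h (x 0) * ∏ i : Fin m, KK rm rp ε (x i.castSucc) (x i.succ) := by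
  refine (hh.comp (measurable_pi_apply 0)).mul ?_
  refine Finset.measurable_prod _ fun i _ => ?_
  have hp : Measurable fun x : Fin (m + 1) → E3R => ((x i.castSucc, x i.succ) : E3R × E3R) :=
    (measurable_pi_apply i.castSucc).prodMk (measurable_pi_apply i.succ)
  exact (measurable_KK rm rp ε).comp hp

lemma chain (rm rp ε : ℝ) (hrm : 0 < rm) (hrmp : rm < rp) (hε0 : 0 < ε) (hε1 : ε ≤ 1)
    (h : E3R → ℝ≥0∞) (hh : Measurable h) : ∀ m : ℕ,
    (∫⁻ x : Fin (m + 1) → E3R,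
        h (x 0) * ∏ i : Fin m, KK rm rp ε (x i.castSucc) (x i.succ)) ≤
      (∫⁻ y : E3R, h y) *
        ENNReal.ofReal (4 * Real.pi * (2 * rp + 1) ^ 2 * (rp - rm) * ε) ^ m := by
  intro m
  induction m with
  | zero =>
    simp only [Finset.univ_eq_empty, Finset.prod_empty, mul_one, pow_zero]
    have hmp := MeasureTheory.volume_preserving_funUnique (Fin 1) E3R
    have := hmp.lintegral_comp hh
    rw [← this]
    exact le_refl _
  | succ m ih =>
    set C := ENNReal.ofReal (4 * Real.pi * (2 * rp + 1) ^ 2 * (rp - rm) * ε) with hC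
    set e := MeasurableEquiv.piFinSuccAbove (fun _ : Fin (m + 2) => E3R) (Fin.last (m + 1))
      with he
    have hmp := MeasureTheory.volume_preserving_piFinSuccAbove
      (fun _ : Fin (m + 2) => E3R) (Fin.last (m + 1))
    set F : (Fin (m + 2) → E3R) → ℝ≥0∞ := fun x =>
      h (x 0) * ∏ i : Fin (m + 1), KK rm rp ε (x i.castSucc) (x i.succ) with hF
    have hFm : Measurable F := measurable_chainA rm rp ε h hh (m + 1)
    haveI hsig : SigmaFinite (volume : Measure (Fin (m + 1) → E3R)) := by
      rw [MeasureTheory.volume_pi]; exact Measure.pi.sigmaFinite _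
    have step1 : (∫⁻ x : Fin (m + 2) → E3R, F x) =
        ∫⁻ p : E3R × (Fin (m + 1) → E3R), F (e.symm p) := by
      rw [← (hmp.symm e).lintegral_comp hFm]
    rw [step1, Measure.volume_eq_prod E3R (Fin (m + 1) → E3R),
      lintegral_prod_symm' (fun p : E3R × (Fin (m + 1) → E3R) => F (e.symm p))
        (hFm.comp e.symm.measurable)]
    -- compute F (e.symm (z, r))
    have hkey : ∀ (z : E3R) (r : Fin (m + 1) → E3R),
        F (e.symm (z, r)) =
          (h (r 0) * ∏ i : Fin m, KK rm rp ε (r i.castSucc) (r i.succ)) *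
            KK rm rp ε (r (Fin.last m)) z := by
      intro z r
      have hes : e.symm (z, r) = Fin.insertNth (Fin.last (m + 1)) z r := rfl
      set x : Fin (m + 2) → E3R := Fin.insertNth (Fin.last (m + 1)) z r with hx
      have hcs : ∀ j : Fin (m + 1), x j.castSucc = r j := by
        intro j
        rw [hx, ← Fin.succAbove_last, Fin.insertNth_apply_succAbove]
      have hlast : x (Fin.last (m + 1)) = z := by
        rw [hx, Fin.insertNth_apply_same]
      rw [hF, hes]
      show h (x 0) * ∏ i : Fin (m + 1), KK rm rp ε (x i.castSucc) (x i.succ) =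
        (h (r 0) * ∏ i : Fin m, KK rm rp ε (r i.castSucc) (r i.succ)) *
          KK rm rp ε (r (Fin.last m)) z
      rw [Fin.prod_univ_castSucc (f := fun i : Fin (m + 1) =>
        KK rm rp ε (x i.castSucc) (x i.succ))]
      have h0 : x 0 = r 0 := by rw [← Fin.castSucc_zero, hcs]
      have hterm : ∀ j : Fin m, KK rm rp ε (x j.castSucc.castSucc) (x j.castSucc.succ) =
          KK rm rp ε (r j.castSucc) (r j.succ) := by
        intro j
        rw [Fin.succ_castSucc, hcs, hcs]
      have hlastterm : KK rm rp ε (x (Fin.last m).castSucc) (x (Fin.last m).succ) =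
          KK rm rp ε (r (Fin.last m)) z := by
        rw [Fin.succ_last, hcs, hlast]
      rw [h0, hlastterm, Finset.prod_congr rfl (fun j _ => hterm j), mul_assoc]
    calc
      (∫⁻ r : Fin (m + 1) → E3R, ∫⁻ z : E3R, F (e.symm (z, r)))
          ≤ ∫⁻ r : Fin (m + 1) → E3R,
            (h (r 0) * ∏ i : Fin m, KK rm rp ε (r i.castSucc) (r i.succ)) * C := by
        refine lintegral_mono fun r => ?_
        have : (∫⁻ z : E3R, F (e.symm (z, r))) =
            (h (r 0) * ∏ i : Fin m, KK rm rp ε (r i.castSucc) (r i.succ)) *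
              ∫⁻ z : E3R, KK rm rp ε (r (Fin.last m)) z := by
          rw [← lintegral_const_mul _ (measurable_KK2 rm rp ε _)]
          exact lintegral_congr fun z => hkey z r
        rw [this]
        exact mul_le_mul_right (KK_bound rm rp ε hrm hrmp hε0 hε1 _) _
      _ = (∫⁻ r : Fin (m + 1) → E3R,
            h (r 0) * ∏ i : Fin m, KK rm rp ε (r i.castSucc) (r i.succ)) * C := by
        rw [lintegral_mul_const _ (measurable_chainA rm rp ε h hh m)]
      _ ≤ ((∫⁻ y : E3R, h y) * C ^ m) * C := mul_le_mul_left ih _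
      _ = (∫⁻ y : E3R, h y) * C ^ (m + 1) := by rw [mul_assoc, ← pow_succ]

lemma idem_prod {m : ℕ} (b : Fin (m + 1) → ℝ≥0∞) (hb : ∀ i, b i = 0 ∨ b i = 1) :
    b 0 * ∏ i : Fin m, (b i.castSucc * b i.succ) = ∏ i, b i := by
  by_cases hz : ∃ j, b j = 0
  · obtain ⟨j, hj⟩ := hz
    rw [Finset.prod_eq_zero (Finset.mem_univ j) hj]
    cases j using Fin.cases with
    | zero => rw [hj, zero_mul]
    | succ i =>
      rw [Finset.prod_eq_zero (Finset.mem_univ i) (by rw [hj, mul_zero]), mul_zero]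
  · push_neg at hz
    have hb1 : ∀ j, b j = 1 := fun j => (hb j).resolve_left (hz j)
    simp [hb1]


/-- the chain integral estimate. Lebesgue measure on `(ℝ³×ℝ)^M` is the
product `volume`; the integrand is `g(x_0,x̌_0)` times the indicators that all radii lie
in `[r_-,r_+]` and that consecutive globules form an `ε`-chain of contacts. -/
theorem statement10 (M : ℕ) (hM : 2 ≤ M) (rm rp : ℝ) (hrm : 0 < rm) (hrmp : rm < rp)
    (ε : ℝ) (hε0 : 0 < ε) (hε1 : ε ≤ 1)
    (g : E3R → ℝ≥0∞) (hg : Measurable g) :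
    (∫⁻ x : Fin M → E3R,
        g (x ⟨0, by omega⟩) *
        (∏ i : Fin M, if (x i).2 ∈ Set.Icc rm rp then (1 : ℝ≥0∞) else 0) *
        (∏ i : Fin M, if (i : ℕ) = 0 then (1 : ℝ≥0∞) else
          (if ‖(x i).1 - (x (prev i)).1‖ ∈
              Set.Icc ((x (prev i)).2 + (x i).2) ((x (prev i)).2 + (x i).2 + ε)
            then 1 else 0))) ≤
      (∫⁻ y in (Set.univ ×ˢ Set.Icc rm rp : Set E3R), g y) *
        ENNReal.ofReal (4 * Real.pi * (2 * rp + 1) ^ 2 * (rp - rm) * ε) ^ (M - 1) := by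
  obtain ⟨m, rfl⟩ : ∃ m, M = m + 1 := ⟨M - 1, by omega⟩
  have hzero : (⟨0, by omega⟩ : Fin (m + 1)) = 0 := by
    ext; simp
  have hptwise : ∀ x : Fin (m + 1) → E3R,
      g (x ⟨0, by omega⟩) *
        (∏ i : Fin (m + 1), if (x i).2 ∈ Set.Icc rm rp then (1 : ℝ≥0∞) else 0) *
        (∏ i : Fin (m + 1), if (i : ℕ) = 0 then (1 : ℝ≥0∞) else
          (if ‖(x i).1 - (x (prev i)).1‖ ∈
              Set.Icc ((x (prev i)).2 + (x i).2) ((x (prev i)).2 + (x i).2 + ε)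
            then 1 else 0)) =
      (g (x 0) * aInd rm rp (x 0).2) *
        ∏ i : Fin m, KK rm rp ε (x i.castSucc) (x i.succ) := by
    intro x
    have h1st : (∏ i : Fin (m + 1), if (x i).2 ∈ Set.Icc rm rp then (1 : ℝ≥0∞) else 0) =
        aInd rm rp (x 0).2 *
          ∏ i : Fin m, (aInd rm rp (x i.castSucc).2 * aInd rm rp (x i.succ).2) := by
      have := idem_prod (fun i => aInd rm rp (x i).2) (fun i => aInd_cases _ _ _)
      rw [this]
      exact Finset.prod_congr rfl fun i _ => by simp only [aInd]
    have h2nd : (∏ i : Fin (m + 1), if (i : ℕ) = 0 then (1 : ℝ≥0∞) else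
          (if ‖(x i).1 - (x (prev i)).1‖ ∈
              Set.Icc ((x (prev i)).2 + (x i).2) ((x (prev i)).2 + (x i).2 + ε)
            then 1 else 0)) =
        ∏ i : Fin m, sInd ε (x i.castSucc) (x i.succ) := by
      rw [Fin.prod_univ_succ]
      rw [if_pos (by simp : ((0 : Fin (m + 1)) : ℕ) = 0), one_mul]
      refine Finset.prod_congr rfl fun i _ => ?_
      rw [if_neg (by simp [Fin.val_succ] : ¬ ((i.succ : Fin (m + 1)) : ℕ) = 0)]
      have hprev : prev i.succ = i.castSucc := by
        unfold prev; ext; simp [Fin.val_succ]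
      rw [hprev]
      simp only [sInd]
    have hKK : ∏ i : Fin m, KK rm rp ε (x i.castSucc) (x i.succ) =
        (∏ i : Fin m, (aInd rm rp (x i.castSucc).2 * aInd rm rp (x i.succ).2)) *
          ∏ i : Fin m, sInd ε (x i.castSucc) (x i.succ) := by
      rw [← Finset.prod_mul_distrib]
      exact Finset.prod_congr rfl fun i _ => by simp only [KK]; ring
    rw [hzero, h1st, h2nd, hKK]
    ring
  rw [lintegral_congr hptwise]
  have hh : Measurable fun y : E3R => g y * aInd rm rp y.2 :=
    hg.mul ((measurable_aInd rm rp).comp measurable_snd)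
  have := chain rm rp ε hrm hrmp hε0 hε1 (fun y => g y * aInd rm rp y.2) hh m
  refine le_trans this (le_of_eq ?_)
  have hset : (∫⁻ y : E3R, g y * aInd rm rp y.2) =
      ∫⁻ y in (Set.univ ×ˢ Set.Icc rm rp : Set E3R), g y := by
    rw [← lintegral_indicator (MeasurableSet.univ.prod measurableSet_Icc) g]
    refine lintegral_congr fun y => ?_
    simp only [Set.indicator_apply, Set.mem_prod, Set.mem_univ, true_and, aInd]
    split_ifs <;> simp
  rw [hset]
  congr 1
end
end
end

section
/- Let M ≥ 2 and n ≥ M be integers, 0 < r_- < r_+, 0 < ε ≤ 1, and let ψ : ℝ³×ℝ → [0,∞] be measurable. Then ν_n(⛓^M_n(ε)) ≤ (n!/(n−M)!) · ν_{n−M}((ℝ³×ℝ)^{n−M}) · ( ∫_{ℝ³×[r_-,r_+]} e^{−ψ(x,x̌)} dx dx̌ ) · ( 4π(2r_+ + 1)²(r_+ − r_-) ε )^{M−1}. -/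
open MeasureTheory
open scoped ENNReal

noncomputable section

/-- `expNeg a = e^{-a}` for `a ∈ [0,∞]`, with `e^{-∞} = 0`. -/
def expNeg (a : ℝ≥0∞) : ℝ≥0∞ :=
  if a = ∞ then 0 else ENNReal.ofReal (Real.exp (-a.toReal))

/-- The set of allowed configurations of `n` globules: all radii in `[r_-,r_+]`
and no two globules overlap. -/
def AgN (rm rp : ℝ) (n : ℕ) : Set (Fin n → E3R) :=
  {x | (∀ i, (x i).2 ∈ Set.Icc rm rp) ∧
    ∀ i j : Fin n, i ≠ j → (x i).2 + (x j).2 ≤ ‖(x i).1 - (x j).1‖}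

/-- The configurations of `n` globules containing an `ε`-chain of `M` globules:
there are distinct indices `i₁,…,i_M` with consecutive globules `ε`-close. -/
def chainSet (M n : ℕ) (ε : ℝ) : Set (Fin n → E3R) :=
  {x | ∃ f : Fin M → Fin n, Function.Injective f ∧
    ∀ k : Fin M, (k : ℕ) ≠ 0 →
      ‖(x (f k)).1 - (x (f (prev k))).1‖ < (x (f k)).2 + (x (f (prev k))).2 + ε}

/-- The measure `ν_n(A) = ∫_A exp(-∑ᵢ ψ(xᵢ,x̌ᵢ)) 1_{𝒜_g}(𝐱) d𝐱` on `(ℝ³×ℝ)ⁿ`. -/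
def nu (ψ : E3R → ℝ≥0∞) (rm rp : ℝ) (n : ℕ) (A : Set (Fin n → E3R)) : ℝ≥0∞ :=
  ∫⁻ x in A, (∏ i : Fin n, expNeg (ψ (x i))) * (AgN rm rp n).indicator (fun _ => 1) x

end

namespace S11
open Set Metric

instance instSFinE3R (ι : Type) [Fintype ι] : SigmaFinite (volume : Measure (ι → E3R)) :=
  MeasureTheory.Measure.pi.sigmaFinite (fun _ : ι => (volume : Measure E3R))

lemma measurable_expNeg : Measurable expNeg := by
  unfold expNeg
  exact Measurable.ite (measurableSet_eq) measurable_const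
    (ENNReal.measurable_ofReal.comp (Real.measurable_exp.comp ENNReal.measurable_toReal.neg))

lemma expNeg_le_one (a : ℝ≥0∞) : expNeg a ≤ 1 := by
  unfold expNeg; split
  · exact zero_le_one
  · simpa [ENNReal.ofReal_le_one] using Real.exp_le_one_iff.mpr (neg_nonpos.mpr ENNReal.toReal_nonneg)

lemma gamma_calc : Real.sqrt Real.pi ^ 3 / Real.Gamma (3 / 2 + 1) = 4 / 3 * Real.pi := by
  have h2 : Real.Gamma (3 / 2) = 1 / 2 * Real.sqrt Real.pi := by
    rw [show (3 : ℝ) / 2 = 1 / 2 + 1 by norm_num, Real.Gamma_add_one (by norm_num),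
      Real.Gamma_one_half_eq]
  have h1 : Real.Gamma (3 / 2 + 1) = 3 / 2 * (1 / 2 * Real.sqrt Real.pi) := by
    rw [Real.Gamma_add_one (by norm_num), h2]
  have h4 : (0:ℝ) < Real.sqrt Real.pi := Real.sqrt_pos.mpr Real.pi_pos
  have h3 : Real.sqrt Real.pi ^ 3 = Real.pi * Real.sqrt Real.pi := by
    rw [pow_succ, Real.sq_sqrt Real.pi_pos.le]
  rw [h1, h3]
  field_simp
  ring

lemma shell_vol (a : EuclideanSpace ℝ (Fin 3)) {s R eps : ℝ} (hs : 0 ≤ s) (heps : 0 ≤ eps)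
    (hR : s + eps ≤ R) :
    volume {c : EuclideanSpace ℝ (Fin 3) | s ≤ ‖c - a‖ ∧ ‖c - a‖ < s + eps} ≤
      ENNReal.ofReal (4 * Real.pi * R ^ 2 * eps) := by
  have hsub : {c : EuclideanSpace ℝ (Fin 3) | s ≤ ‖c - a‖ ∧ ‖c - a‖ < s + eps} ⊆
      Metric.ball a (s + eps) \ Metric.ball a s := by
    intro c hc
    constructor
    · rw [Metric.mem_ball, dist_eq_norm]; exact hc.2
    · rw [Metric.mem_ball, dist_eq_norm, not_lt]; exact hc.1
  refine le_trans (measure_mono hsub) ?_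
  rw [measure_diff (Metric.ball_subset_ball (by linarith)) measurableSet_ball.nullMeasurableSet
    measure_ball_lt_top.ne]
  rw [EuclideanSpace.volume_ball, EuclideanSpace.volume_ball]
  simp only [Fintype.card_fin]
  rw [← ENNReal.sub_mul (fun _ _ => ENNReal.ofReal_ne_top)]
  rw [← ENNReal.ofReal_pow (by linarith), ← ENNReal.ofReal_pow hs,
    ← ENNReal.ofReal_sub _ (pow_nonneg hs 3), ← ENNReal.ofReal_mul (by nlinarith [pow_le_pow_left₀ hs (by linarith : s ≤ s + eps) 3])]
  apply ENNReal.ofReal_le_ofReal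
  have hg : Real.sqrt Real.pi ^ 3 / Real.Gamma ((3:ℕ) / 2 + 1) = 4 / 3 * Real.pi := by
    rw [show ((3:ℕ):ℝ) / 2 + 1 = (3:ℝ)/2 + 1 by norm_num]
    exact gamma_calc
  rw [hg]
  have h1 : (s + eps) ^ 3 - s ^ 3 ≤ 3 * (s + eps) ^ 2 * eps := by
    nlinarith [mul_nonneg hs heps, mul_nonneg (mul_nonneg hs hs) heps,
      mul_nonneg (mul_nonneg hs heps) heps, pow_nonneg heps 3]
  have h2 : (s + eps) ^ 2 ≤ R ^ 2 := pow_le_pow_left₀ (by linarith) hR 2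
  have hpoly : (s + eps) ^ 3 - s ^ 3 ≤ 3 * R ^ 2 * eps := by nlinarith [h1, h2, heps]
  calc ((s + eps) ^ 3 - s ^ 3) * (4 / 3 * Real.pi)
      ≤ 3 * R ^ 2 * eps * (4 / 3 * Real.pi) :=
        mul_le_mul_of_nonneg_right hpoly (by positivity)
    _ = 4 * Real.pi * R ^ 2 * eps := by ring

noncomputable section
variable (rm rp ε : ℝ)

def V : ℝ≥0∞ := ENNReal.ofReal (4 * Real.pi * (2 * rp + 1) ^ 2 * (rp - rm) * ε)

def Ann (a : E3R) : Set E3R :=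
  {y | y.2 ∈ Set.Icc rm rp ∧ y.2 + a.2 ≤ ‖y.1 - a.1‖ ∧ ‖y.1 - a.1‖ < y.2 + a.2 + ε}

lemma measurableSet_Ann (a : E3R) : MeasurableSet (Ann rm rp ε a) := by
  have hn : Measurable fun y : E3R => ‖y.1 - a.1‖ := (measurable_fst.sub measurable_const).norm
  have : Ann rm rp ε a = ({y : E3R | rm ≤ y.2} ∩ {y | y.2 ≤ rp} ∩
      {y | y.2 + a.2 ≤ ‖y.1 - a.1‖}) ∩ {y | ‖y.1 - a.1‖ < y.2 + a.2 + ε} := by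
    ext y; simp only [Ann, Set.mem_Icc, Set.mem_setOf_eq, Set.mem_inter_iff]; tauto
  rw [this]
  exact (((measurableSet_le measurable_const measurable_snd).inter
    (measurableSet_le measurable_snd measurable_const)).inter
    (measurableSet_le (measurable_snd.add measurable_const) hn)).inter
    (measurableSet_lt hn ((measurable_snd.add measurable_const).add measurable_const))

lemma Ann_vol (hrm : 0 < rm) (hrmp : rm < rp) (hε0 : 0 < ε) (hε1 : ε ≤ 1) {a : E3R}
    (ha : a.2 ∈ Set.Icc rm rp) : volume (Ann rm rp ε a) ≤ V rm rp ε := by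
  have hvol : (volume : Measure E3R) =
      (volume : Measure (EuclideanSpace ℝ (Fin 3))).prod (volume : Measure ℝ) := rfl
  rw [hvol, Measure.prod_apply_symm (s := Ann rm rp ε a) (measurableSet_Ann rm rp ε a)]
  have hb : ∀ ρ : ℝ, volume ((fun c => (c, ρ)) ⁻¹' Ann rm rp ε a) ≤
      (Set.Icc rm rp).indicator (fun _ => ENNReal.ofReal (4 * Real.pi * (2 * rp + 1) ^ 2 * ε)) ρ := by
    intro ρ
    by_cases hρ : ρ ∈ Set.Icc rm rp
    · rw [Set.indicator_of_mem hρ]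
      have hsub : ((fun c => (c, ρ)) ⁻¹' Ann rm rp ε a) ⊆
          {c : EuclideanSpace ℝ (Fin 3) | ρ + a.2 ≤ ‖c - a.1‖ ∧ ‖c - a.1‖ < ρ + a.2 + ε} := by
        intro c hc; exact ⟨hc.2.1, hc.2.2⟩
      refine le_trans (measure_mono hsub) (shell_vol a.1 (by simp at hρ ha; linarith)
        hε0.le (by simp at hρ ha; linarith))
    · have : ((fun c => (c, ρ)) ⁻¹' Ann rm rp ε a) = ∅ := by
        ext c; simp only [Set.mem_preimage, Set.mem_empty_iff_false, iff_false]
        intro hc; exact hρ hc.1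
      rw [this, Set.indicator_of_notMem hρ]; simp
  refine le_trans (lintegral_mono hb) ?_
  rw [lintegral_indicator measurableSet_Icc, setLIntegral_const, Real.volume_Icc]
  rw [V, ← ENNReal.ofReal_mul (by positivity)]
  apply ENNReal.ofReal_le_ofReal
  nlinarith [Real.pi_pos, sq_nonneg (2 * rp + 1)]
end

noncomputable section
variable (rm rp ε : ℝ)

def Dset (M : ℕ) : Set (Fin M → E3R) :=
  {x | (∀ k, (x k).2 ∈ Set.Icc rm rp) ∧
    ∀ k : Fin M, (k : ℕ) ≠ 0 →
      (x k).2 + (x (prev k)).2 ≤ ‖(x k).1 - (x (prev k)).1‖ ∧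
      ‖(x k).1 - (x (prev k)).1‖ < (x k).2 + (x (prev k)).2 + ε}

lemma m_snd {n : ℕ} (i : Fin n) : Measurable fun x : Fin n → E3R => (x i).2 :=
  (measurable_pi_apply i).snd

lemma m_normdiff {n : ℕ} (i j : Fin n) :
    Measurable fun x : Fin n → E3R => ‖(x i).1 - (x j).1‖ :=
  ((measurable_pi_apply i).fst.sub (measurable_pi_apply j).fst).norm

lemma measurableSet_Dset (M : ℕ) : MeasurableSet (Dset rm rp ε M) := by
  have : Dset rm rp ε M = (⋂ k, ({x : Fin M → E3R | rm ≤ (x k).2} ∩ {x | (x k).2 ≤ rp})) ∩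
      ⋂ k : Fin M, ⋂ _h : (k : ℕ) ≠ 0,
        ({x : Fin M → E3R | (x k).2 + (x (prev k)).2 ≤ ‖(x k).1 - (x (prev k)).1‖} ∩
         {x | ‖(x k).1 - (x (prev k)).1‖ < (x k).2 + (x (prev k)).2 + ε}) := by
    ext x
    simp only [Dset, Set.mem_setOf_eq, Set.mem_inter_iff, Set.mem_iInter, Set.mem_Icc]
  rw [this]
  exact (MeasurableSet.iInter fun k => (measurableSet_le measurable_const (m_snd k)).inter
      (measurableSet_le (m_snd k) measurable_const)).inter
    (MeasurableSet.iInter fun k => MeasurableSet.iInter fun _ =>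
      (measurableSet_le ((m_snd k).add (m_snd (prev k))) (m_normdiff k (prev k))).inter
      (measurableSet_lt (m_normdiff k (prev k)) (((m_snd k).add (m_snd (prev k))).add
        measurable_const)))

lemma prev_castSucc {m : ℕ} (j : Fin (m + 1)) :
    prev (Fin.castSucc j) = Fin.castSucc (prev j) := by
  apply Fin.ext; simp [prev]

lemma prev_last (m : ℕ) : prev (Fin.last (m + 1)) = Fin.castSucc (Fin.last m) := by
  apply Fin.ext; simp [prev]

variable {ψ : E3R → ℝ≥0∞}

lemma F_meas (hψ : Measurable ψ) (M : ℕ) :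
    Measurable fun x : Fin (M + 1) → E3R =>
      expNeg (ψ (x 0)) * (Dset rm rp ε (M + 1)).indicator (fun _ => (1 : ℝ≥0∞)) x :=
  (measurable_expNeg.comp (hψ.comp (measurable_pi_apply 0))).mul
    (measurable_const.indicator (measurableSet_Dset rm rp ε (M + 1)))

lemma chain_integral (hψ : Measurable ψ) (hrm : 0 < rm) (hrmp : rm < rp) (hε0 : 0 < ε)
    (hε1 : ε ≤ 1) : ∀ m : ℕ,
    (∫⁻ x : Fin (m + 1) → E3R,
        expNeg (ψ (x 0)) * (Dset rm rp ε (m + 1)).indicator (fun _ => 1) x) ≤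
      (∫⁻ y in (Set.univ ×ˢ Set.Icc rm rp : Set E3R), expNeg (ψ y)) * V rm rp ε ^ m := by
  intro m
  induction m with
  | zero =>
    rw [pow_zero, mul_one]
    have hD : ∀ x : Fin 1 → E3R, (Dset rm rp ε 1).indicator (fun _ => (1:ℝ≥0∞)) x =
        (Set.univ ×ˢ Set.Icc rm rp : Set E3R).indicator (fun _ => (1:ℝ≥0∞)) (x 0) := by
      intro x
      have : x ∈ Dset rm rp ε 1 ↔ x 0 ∈ (Set.univ ×ˢ Set.Icc rm rp : Set E3R) := by
        constructor
        · intro hx; exact ⟨trivial, hx.1 0⟩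
        · intro hx
          refine ⟨fun k => ?_, fun k hk => absurd (Fin.val_eq_zero k) hk⟩
          rw [Fin.eq_zero k]; exact hx.2
      by_cases h : x ∈ Dset rm rp ε 1
      · rw [Set.indicator_of_mem h, Set.indicator_of_mem (this.mp h)]
      · rw [Set.indicator_of_notMem h, Set.indicator_of_notMem (fun hc => h (this.mpr hc))]
    simp_rw [hD]
    set g : E3R → ℝ≥0∞ := fun y =>
      expNeg (ψ y) * (Set.univ ×ˢ Set.Icc rm rp : Set E3R).indicator (fun _ => 1) y with hg
    have hgm : Measurable g := (measurable_expNeg.comp hψ).mul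
      (measurable_const.indicator (MeasurableSet.univ.prod measurableSet_Icc))
    have key : (∫⁻ x : Fin 1 → E3R, g ((MeasurableEquiv.funUnique (Fin 1) E3R) x)) =
        ∫⁻ y : E3R, g y := (volume_preserving_funUnique (Fin 1) E3R).lintegral_comp hgm
    have : (∫⁻ x : Fin 1 → E3R, expNeg (ψ (x 0)) *
        (Set.univ ×ˢ Set.Icc rm rp : Set E3R).indicator (fun _ => 1) (x 0)) =
        ∫⁻ y : E3R, g y := by
      rw [← key]; congr 1
    rw [this, hg]
    rw [← lintegral_indicator (MeasurableSet.univ.prod measurableSet_Icc)]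
    apply lintegral_mono
    intro y
    by_cases hy : y ∈ (Set.univ ×ˢ Set.Icc rm rp : Set E3R) <;>
      simp [Set.indicator_apply, hy]
  | succ m ih =>
    set T := MeasurableEquiv.piFinSuccAbove (fun _ : Fin (m + 2) => E3R) (Fin.last (m + 1))
      with hT
    set F : (Fin (m + 2) → E3R) → ℝ≥0∞ := fun x =>
      expNeg (ψ (x 0)) * (Dset rm rp ε (m + 2)).indicator (fun _ => 1) x with hF
    have hFm : Measurable F := F_meas rm rp ε hψ (m + 1)
    have step1 : (∫⁻ x, F x) = ∫⁻ p : E3R × (Fin (m + 1) → E3R), F (T.symm p) :=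
      ((MeasurePreserving.symm T (volume_preserving_piFinSuccAbove (fun _ : Fin (m + 2) => E3R)
        (Fin.last (m + 1)))).lintegral_comp hFm).symm
    rw [step1]
    rw [Measure.volume_eq_prod E3R (Fin (m + 1) → E3R), lintegral_prod_symm (fun p : E3R × (Fin (m + 1) → E3R) => F (T.symm p))
      ((hFm.comp T.symm.measurable).aemeasurable)]
    -- pointwise bound on the inner integrand
    have hpt : ∀ (x' : Fin (m + 1) → E3R) (y : E3R), F (T.symm (y, x')) ≤
        (expNeg (ψ (x' 0)) * (Dset rm rp ε (m + 1)).indicator (fun _ => 1) x') *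
          (Ann rm rp ε (x' (Fin.last m))).indicator (fun _ => 1) y := by
      intro x' y
      have hts : T.symm (y, x') = (Fin.last (m + 1)).insertNth y x' := by
        simp [hT, MeasurableEquiv.piFinSuccAbove_symm_apply, Fin.insertNthEquiv]
      set x : Fin (m + 2) → E3R := (Fin.last (m + 1)).insertNth y x' with hx
      have hcs : ∀ j : Fin (m + 1), x (Fin.castSucc j) = x' j := by
        intro j
        have := Fin.insertNth_apply_succAbove (α := fun _ : Fin (m + 2) => E3R)
          (i := Fin.last (m + 1)) (j := j) (x := y) (p := x')
        rwa [Fin.succAbove_last] at this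
      have hlast : x (Fin.last (m + 1)) = y := Fin.insertNth_apply_same _ _ _
      have h0 : x 0 = x' 0 := by
        have := hcs 0; rwa [Fin.castSucc_zero] at this
      rw [hts, hF]
      simp only []
      rw [h0]
      by_cases hxD : x ∈ Dset rm rp ε (m + 2)
      · -- then x' ∈ Dset (m+1) and y ∈ Ann
        have hx'D : x' ∈ Dset rm rp ε (m + 1) := by
          constructor
          · intro k; rw [← hcs k]; exact hxD.1 (Fin.castSucc k)
          · intro k hk
            have hkk : ((Fin.castSucc k : Fin (m + 2)) : ℕ) ≠ 0 := by
              simpa using hk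
            have := hxD.2 (Fin.castSucc k) hkk
            rwa [prev_castSucc, hcs, hcs] at this
        have hyA : y ∈ Ann rm rp ε (x' (Fin.last m)) := by
          have hkk : ((Fin.last (m + 1) : Fin (m + 2)) : ℕ) ≠ 0 := by simp
          have h2 := hxD.2 (Fin.last (m + 1)) hkk
          rw [prev_last, hlast, hcs] at h2
          exact ⟨by rw [← hlast]; exact hxD.1 (Fin.last (m + 1)), h2.1, h2.2⟩
        rw [Set.indicator_of_mem hxD, Set.indicator_of_mem hx'D, Set.indicator_of_mem hyA]
        simp
      · rw [Set.indicator_of_notMem hxD]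
        simp
    refine le_trans (lintegral_mono fun x' => lintegral_mono (hpt x')) ?_
    have hinner : ∀ x' : Fin (m + 1) → E3R,
        (∫⁻ y : E3R, (expNeg (ψ (x' 0)) * (Dset rm rp ε (m + 1)).indicator (fun _ => 1) x') *
          (Ann rm rp ε (x' (Fin.last m))).indicator (fun _ => 1) y) ≤
        (expNeg (ψ (x' 0)) * (Dset rm rp ε (m + 1)).indicator (fun _ => 1) x') * V rm rp ε := by
      intro x'
      have hce : (expNeg (ψ (x' 0)) * (Dset rm rp ε (m + 1)).indicator (fun _ => 1) x') ≠ ∞ := by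
        apply ne_top_of_le_ne_top (b := 1) ENNReal.one_ne_top
        calc expNeg (ψ (x' 0)) * (Dset rm rp ε (m + 1)).indicator (fun _ => 1) x'
            ≤ 1 * 1 := mul_le_mul' (expNeg_le_one _) (Set.indicator_le_self' (by simp) x' |>.trans (by simp))
          _ = 1 := by simp
      rw [lintegral_const_mul' _ _ hce, lintegral_indicator_const (measurableSet_Ann rm rp ε _), one_mul]
      by_cases hx'D : x' ∈ Dset rm rp ε (m + 1)
      · exact mul_le_mul_right (Ann_vol rm rp ε hrm hrmp hε0 hε1 (hx'D.1 (Fin.last m))) _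
      · rw [Set.indicator_of_notMem hx'D]; simp
    refine le_trans (lintegral_mono hinner) ?_
    rw [lintegral_mul_const' _ _ (by simp [V])]
    rw [pow_succ, ← mul_assoc]
    exact mul_le_mul_left (ih) _
end

noncomputable section
variable (rm rp ε : ℝ) {ψ : E3R → ℝ≥0∞}

lemma measurableSet_AgN (n : ℕ) : MeasurableSet (AgN rm rp n) := by
  have : AgN rm rp n = (⋂ i, ({x : Fin n → E3R | rm ≤ (x i).2} ∩ {x | (x i).2 ≤ rp})) ∩
      ⋂ i : Fin n, ⋂ j : Fin n, ⋂ _h : i ≠ j,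
        {x : Fin n → E3R | (x i).2 + (x j).2 ≤ ‖(x i).1 - (x j).1‖} := by
    ext x
    simp only [AgN, Set.mem_setOf_eq, Set.mem_inter_iff, Set.mem_iInter, Set.mem_Icc]
  rw [this]
  exact (MeasurableSet.iInter fun k => (measurableSet_le measurable_const (m_snd k)).inter
      (measurableSet_le (m_snd k) measurable_const)).inter
    (MeasurableSet.iInter fun i => MeasurableSet.iInter fun j => MeasurableSet.iInter fun _ =>
      measurableSet_le ((m_snd i).add (m_snd j)) (m_normdiff i j))

lemma g_meas (hψ : Measurable ψ) (n : ℕ) :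
    Measurable fun x : Fin n → E3R =>
      (∏ i : Fin n, expNeg (ψ (x i))) * (AgN rm rp n).indicator (fun _ => (1 : ℝ≥0∞)) x :=
  (Finset.measurable_prod _ fun i _ =>
      measurable_expNeg.comp (hψ.comp (measurable_pi_apply i))).mul
    (measurable_const.indicator (measurableSet_AgN rm rp n))

def Cset (M n : ℕ) (f : Fin M ↪ Fin n) : Set (Fin n → E3R) :=
  {x | ∀ k : Fin M, (k : ℕ) ≠ 0 →
    ‖(x (f k)).1 - (x (f (prev k))).1‖ < (x (f k)).2 + (x (f (prev k))).2 + ε}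

lemma measurableSet_Cset (M n : ℕ) (f : Fin M ↪ Fin n) : MeasurableSet (Cset ε M n f) := by
  have : Cset ε M n f = ⋂ k : Fin M, ⋂ _h : (k : ℕ) ≠ 0,
      {x : Fin n → E3R |
        ‖(x (f k)).1 - (x (f (prev k))).1‖ < (x (f k)).2 + (x (f (prev k))).2 + ε} := by
    ext x
    simp only [Cset, Set.mem_setOf_eq, Set.mem_iInter]
  rw [this]
  exact MeasurableSet.iInter fun k => MeasurableSet.iInter fun _ =>
    measurableSet_lt (m_normdiff (f k) (f (prev k)))
      (((m_snd (f k)).add (m_snd (f (prev k)))).add measurable_const)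

set_option maxHeartbeats 1000000 in
lemma per_emb (hψ : Measurable ψ) (hrm : 0 < rm) (hrmp : rm < rp) (hε0 : 0 < ε) (hε1 : ε ≤ 1)
    (m n : ℕ) (hn : m + 1 ≤ n) (f : Fin (m + 1) ↪ Fin n) :
    (∫⁻ x in Cset ε (m + 1) n f,
        (∏ i : Fin n, expNeg (ψ (x i))) * (AgN rm rp n).indicator (fun _ => 1) x) ≤
      (∫⁻ z : Fin (n - (m + 1)) → E3R, (∏ j : Fin (n - (m + 1)), expNeg (ψ (z j))) *
          (AgN rm rp (n - (m + 1))).indicator (fun _ => 1) z) *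
        ((∫⁻ y in (Set.univ ×ˢ Set.Icc rm rp : Set E3R), expNeg (ψ y)) * V rm rp ε ^ m) := by
  classical
  set s : Set (Fin n) := Set.range ⇑f with hs
  have hcards : Fintype.card ↥s = m + 1 := by
    rw [Fintype.card_congr (Equiv.ofInjective ⇑f f.injective).symm, Fintype.card_fin]
  have hcard : Fintype.card (↥sᶜ) = n - (m + 1) := by
    have htot : Fintype.card (Fin n) = Fintype.card ↥s + Fintype.card ↥sᶜ := by
      rw [Fintype.card_congr (Equiv.Set.sumCompl s).symm, Fintype.card_sum]
    rw [Fintype.card_fin] at htot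
    omega
  set e2 : Fin (n - (m + 1)) ≃ ↥sᶜ := Fintype.equivOfCardEq (by rw [Fintype.card_fin, hcard])
    with he2
  set e : (Fin (m + 1) ⊕ Fin (n - (m + 1))) ≃ Fin n :=
    (Equiv.sumCongr (Equiv.ofInjective ⇑f f.injective) e2).trans (Equiv.Set.sumCompl s) with he
  have he1 : ∀ k, e (Sum.inl k) = f k := by
    intro k
    simp [he, Equiv.Set.sumCompl_apply_inl]
  -- the integrand, extended by the Cset indicator
  set H : (Fin n → E3R) → ℝ≥0∞ := (Cset ε (m + 1) n f).indicator
    (fun x => (∏ i : Fin n, expNeg (ψ (x i))) * (AgN rm rp n).indicator (fun _ => 1) x) with hH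
  have hHm : Measurable H := (g_meas rm rp hψ n).indicator (measurableSet_Cset ε (m + 1) n f)
  have step0 : (∫⁻ x in Cset ε (m + 1) n f,
      (∏ i : Fin n, expNeg (ψ (x i))) * (AgN rm rp n).indicator (fun _ => 1) x) =
      ∫⁻ x, H x := (lintegral_indicator (measurableSet_Cset ε (m + 1) n f) _).symm
  rw [step0]
  have step1 : (∫⁻ x, H x) =
      ∫⁻ w : (Fin (m + 1) ⊕ Fin (n - (m + 1))) → E3R,
        H ((MeasurableEquiv.piCongrLeft (fun _ => E3R) e) w) :=
    ((volume_measurePreserving_piCongrLeft (fun _ => E3R) e).lintegral_comp hHm).symm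
  rw [step1]
  have step2 : (∫⁻ w : (Fin (m + 1) ⊕ Fin (n - (m + 1))) → E3R,
      H ((MeasurableEquiv.piCongrLeft (fun _ => E3R) e) w)) =
      ∫⁻ p : (Fin (m + 1) → E3R) × (Fin (n - (m + 1)) → E3R),
        H ((MeasurableEquiv.piCongrLeft (fun _ => E3R) e)
          ((MeasurableEquiv.sumPiEquivProdPi (fun _ => E3R)).symm p)) :=
    ((volume_measurePreserving_sumPiEquivProdPi_symm (fun _ => E3R)).lintegral_comp
      (hHm.comp (MeasurableEquiv.piCongrLeft (fun _ => E3R) e).measurable)).symm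
  rw [step2]
  -- pointwise bound
  set F : (Fin (m + 1) → E3R) → ℝ≥0∞ := fun y =>
    expNeg (ψ (y 0)) * (Dset rm rp ε (m + 1)).indicator (fun _ => 1) y with hF
  set G : (Fin (n - (m + 1)) → E3R) → ℝ≥0∞ := fun z =>
    (∏ j : Fin (n - (m + 1)), expNeg (ψ (z j))) *
      (AgN rm rp (n - (m + 1))).indicator (fun _ => 1) z with hG
  have hpt : ∀ p : (Fin (m + 1) → E3R) × (Fin (n - (m + 1)) → E3R),
      H ((MeasurableEquiv.piCongrLeft (fun _ => E3R) e)
        ((MeasurableEquiv.sumPiEquivProdPi (fun _ => E3R)).symm p)) ≤ F p.1 * G p.2 := by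
    rintro ⟨y, z⟩
    set w : (Fin (m + 1) ⊕ Fin (n - (m + 1))) → E3R :=
      (MeasurableEquiv.sumPiEquivProdPi (fun _ => E3R)).symm (y, z) with hw
    set x : Fin n → E3R := (MeasurableEquiv.piCongrLeft (fun _ => E3R) e) w with hx
    have hwc : ∀ s', w s' = Sum.rec (motive := fun _ => E3R) y z s' := by
      intro s'
      rw [hw, MeasurableEquiv.coe_sumPiEquivProdPi_symm]
      rfl
    have hwl : ∀ k, w (Sum.inl k) = y k := fun k => hwc (Sum.inl k)
    have hwr : ∀ j, w (Sum.inr j) = z j := fun j => hwc (Sum.inr j)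
    have hxe : ∀ s', x (e s') = w s' := fun s' =>
      MeasurableEquiv.piCongrLeft_apply_apply (β := fun _ : Fin n => E3R) e w s'
    have hxf : ∀ k, x (f k) = y k := fun k => by rw [← he1 k, hxe, hwl]
    have hxr : ∀ j, x (e (Sum.inr j)) = z j := fun j => by rw [hxe, hwr]
    show H x ≤ F y * G z
    by_cases hxC : x ∈ Cset ε (m + 1) n f
    · rw [hH, Set.indicator_of_mem hxC]
      by_cases hxA : x ∈ AgN rm rp n
      · rw [Set.indicator_of_mem hxA, mul_one]
        -- split the product
        have hprod : (∏ i : Fin n, expNeg (ψ (x i))) =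
            (∏ k : Fin (m + 1), expNeg (ψ (y k))) *
              ∏ j : Fin (n - (m + 1)), expNeg (ψ (z j)) := by
          rw [← Equiv.prod_comp e (fun i => expNeg (ψ (x i))), Fintype.prod_sum_type]
          congr 1
          · exact Finset.prod_congr rfl fun k _ => by rw [he1, hxf]
          · exact Finset.prod_congr rfl fun j _ => by rw [hxr]
        have hyD : y ∈ Dset rm rp ε (m + 1) := by
          constructor
          · intro k; rw [← hxf k]; exact hxA.1 (f k)
          · intro k hk
            have hne : prev k ≠ k := by
              intro hcontra
              have hv : (k : ℕ) - 1 = (k : ℕ) := congrArg Fin.val hcontra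
              omega
            have hne' : f k ≠ f (prev k) := fun hcontra =>
              hne (f.injective hcontra.symm)
            have h1 := hxA.2 (f k) (f (prev k)) hne'
            have h2 := hxC k hk
            rw [hxf, hxf] at h1 h2
            exact ⟨h1, h2⟩
        have hzA : z ∈ AgN rm rp (n - (m + 1)) := by
          constructor
          · intro j; rw [← hxr j]; exact hxA.1 (e (Sum.inr j))
          · intro i j hij
            have hne : e (Sum.inr i) ≠ e (Sum.inr j) := fun hcontra =>
              hij (Sum.inr_injective (e.injective hcontra))
            have := hxA.2 (e (Sum.inr i)) (e (Sum.inr j)) hne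
            rwa [hxr, hxr] at this
        rw [hprod, hF, hG]
        simp only []
        rw [Set.indicator_of_mem hyD, Set.indicator_of_mem hzA, mul_one, mul_one]
        have hym : (∏ k : Fin (m + 1), expNeg (ψ (y k))) ≤ expNeg (ψ (y 0)) := by
          calc (∏ k : Fin (m + 1), expNeg (ψ (y k)))
              = expNeg (ψ (y 0)) * ∏ k ∈ Finset.univ.erase 0, expNeg (ψ (y k)) :=
                (Finset.mul_prod_erase _ _ (Finset.mem_univ 0)).symm
            _ ≤ expNeg (ψ (y 0)) * 1 :=
                mul_le_mul_right (Finset.prod_le_one' fun i _ => expNeg_le_one _) _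
            _ = expNeg (ψ (y 0)) := mul_one _
        rw [mul_comm (expNeg (ψ (y 0))), mul_comm _ (expNeg (ψ (y 0)))]
        exact mul_le_mul_left hym _
      · rw [Set.indicator_of_notMem hxA, mul_zero]; exact zero_le
    · rw [hH, Set.indicator_of_notMem hxC]; exact zero_le
  refine le_trans (lintegral_mono hpt) ?_
  rw [Measure.volume_eq_prod, lintegral_prod_mul ((F_meas rm rp ε hψ m).aemeasurable)
    ((g_meas rm rp hψ (n - (m + 1))).aemeasurable)]
  rw [mul_comm]
  exact mul_le_mul_right (chain_integral rm rp ε hψ hrm hrmp hε0 hε1 m) _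
end

end S11

theorem statement11 (M n : ℕ) (hM : 2 ≤ M) (hn : M ≤ n) (rm rp : ℝ)
    (hrm : 0 < rm) (hrmp : rm < rp) (ε : ℝ) (hε0 : 0 < ε) (hε1 : ε ≤ 1)
    (ψ : E3R → ℝ≥0∞) (hψ : Measurable ψ) :
    nu ψ rm rp n (chainSet M n ε) ≤
      ((n.factorial : ℝ≥0∞) / ((n - M).factorial : ℝ≥0∞)) *
        nu ψ rm rp (n - M) Set.univ *
        (∫⁻ y in (Set.univ ×ˢ Set.Icc rm rp : Set E3R), expNeg (ψ y)) *
        ENNReal.ofReal (4 * Real.pi * (2 * rp + 1) ^ 2 * (rp - rm) * ε) ^ (M - 1) := by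
  obtain ⟨m, rfl⟩ : ∃ m, M = m + 1 := ⟨M - 1, by omega⟩
  simp only [nu, Nat.add_sub_cancel, Measure.restrict_univ]
  have hsub : chainSet (m + 1) n ε ⊆ ⋃ f : Fin (m + 1) ↪ Fin n, S11.Cset ε (m + 1) n f := by
    rintro x ⟨f, hf, h⟩
    exact Set.mem_iUnion.mpr ⟨⟨f, hf⟩, h⟩
  refine le_trans (lintegral_mono_set hsub) ?_
  refine le_trans (lintegral_iUnion_le _ _) ?_
  rw [tsum_fintype]
  set slab : ℝ≥0∞ := ∫⁻ y in (Set.univ ×ˢ Set.Icc rm rp : Set E3R), expNeg (ψ y) with hslab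
  set B : ℝ≥0∞ := (∫⁻ z : Fin (n - (m + 1)) → E3R, (∏ j : Fin (n - (m + 1)), expNeg (ψ (z j))) *
      (AgN rm rp (n - (m + 1))).indicator (fun _ => 1) z) * (slab * S11.V rm rp ε ^ m) with hB
  have hbound : ∀ f ∈ Finset.univ (α := Fin (m + 1) ↪ Fin n),
      (∫⁻ x in S11.Cset ε (m + 1) n f,
        (∏ i : Fin n, expNeg (ψ (x i))) * (AgN rm rp n).indicator (fun _ => 1) x) ≤ B :=
    fun f _ => S11.per_emb rm rp ε hψ hrm hrmp hε0 hε1 m n hn f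
  refine le_trans (Finset.sum_le_card_nsmul Finset.univ _ B hbound) ?_
  rw [Finset.card_univ, nsmul_eq_mul]
  have hcardemb : (Fintype.card (Fin (m + 1) ↪ Fin n) : ℝ≥0∞) =
      ((n.descFactorial (m + 1) : ℕ) : ℝ≥0∞) := by
    rw [Fintype.card_embedding_eq, Fintype.card_fin, Fintype.card_fin]
  have hkey : ((n - (m + 1)).factorial : ℝ≥0∞) * ((n.descFactorial (m + 1) : ℕ) : ℝ≥0∞) =
      (n.factorial : ℝ≥0∞) := by
    rw [← Nat.cast_mul]
    norm_cast
    exact Nat.factorial_mul_descFactorial hn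
  have hfac : ((n.factorial : ℝ≥0∞) / ((n - (m + 1)).factorial : ℝ≥0∞)) =
      ((n.descFactorial (m + 1) : ℕ) : ℝ≥0∞) :=
    ((ENNReal.eq_div_iff (a := ((n - (m + 1)).factorial : ℝ≥0∞))
      (b := ((n.descFactorial (m + 1) : ℕ) : ℝ≥0∞))
      (by exact_mod_cast (Nat.factorial_pos _).ne') (ENNReal.natCast_ne_top _)).mpr hkey).symm
  rw [hfac, hcardemb]
  apply le_of_eq
  rw [hB, S11.V]
  ring
end

section
/- Let M ≥ 2 be an integer, 0 < r_- < r_+, 0 < ε ≤ 1, and let ψ : ℝ³×ℝ → [0,∞] be measurable. Then, with ⛓^M_n(ε) = ∅ for n < M, the following inequality holds in [0,∞]: Σ_{n=0}^{∞} (1/n!) ν_n(⛓^M_n(ε)) ≤ ( ∫_{ℝ³×[r_-,r_+]} e^{−ψ(x,x̌)} dx dx̌ ) · ( 4π(2r_+ + 1)²(r_+ − r_-) ε )^{M−1} · Σ_{m=0}^{∞} (1/m!) ν_m((ℝ³×ℝ)^m). In particular, the probability that a random configuration drawn from the normalized Poisson mixture of the ν_n contains an ε-chain of M globules is at most ( ∫_{ℝ³×[r_-,r_+]}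 e^{−ψ} ) · ( 4π(2r_+ + 1)²(r_+ − r_-) )^{M−1} ε^{M−1}. -/
open MeasureTheory
open scoped ENNReal

noncomputable section Helpers

open Set MeasureTheory

lemma expNeg_le_one (a : ℝ≥0∞) : expNeg a ≤ 1 := by
  unfold expNeg
  split
  · exact zero_le_one
  · rw [← ENNReal.ofReal_one]
    exact ENNReal.ofReal_le_ofReal (by
      simpa using Real.exp_le_one_iff.mpr (neg_nonpos.mpr ENNReal.toReal_nonneg))

lemma measurable_expNeg : Measurable expNeg := by
  unfold expNeg
  apply Measurable.ite (measurableSet_singleton ⊤) measurable_const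
  exact (ENNReal.measurable_ofReal.comp (Real.measurable_exp.comp
    ENNReal.measurable_toReal.neg))

/-- the indicator-weighted one-globule density -/
def gI (ψ : E3R → ℝ≥0∞) (rm rp : ℝ) : E3R → ℝ≥0∞ :=
  fun y => expNeg (ψ y) * (Set.univ ×ˢ Set.Icc rm rp : Set E3R).indicator 1 y

lemma measurable_gI {ψ : E3R → ℝ≥0∞} (hψ : Measurable ψ) (rm rp : ℝ) :
    Measurable (gI ψ rm rp) := by
  apply ((measurable_expNeg.comp hψ).mul)
  exact (measurable_one.indicator (MeasurableSet.univ.prod measurableSet_Icc))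

lemma gI_le_indicator (ψ : E3R → ℝ≥0∞) (rm rp : ℝ) (y : E3R) :
    gI ψ rm rp y ≤ (Set.univ ×ˢ Set.Icc rm rp : Set E3R).indicator 1 y :=
  mul_le_of_le_one_left (zero_le) (expNeg_le_one _) |>.trans_eq rfl

/-- link indicator between two globules -/
def link (ε : ℝ) (p q : E3R) : ℝ≥0∞ :=
  if p.2 + q.2 ≤ ‖q.1 - p.1‖ ∧ ‖q.1 - p.1‖ < p.2 + q.2 + ε then 1 else 0

lemma measurable_link (ε : ℝ) :
    Measurable (fun pq : E3R × E3R => link ε pq.1 pq.2) := by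
  unfold link
  have h1 : Measurable fun pq : E3R × E3R => pq.1.2 + pq.2.2 :=
    (measurable_snd.comp measurable_fst).add (measurable_snd.comp measurable_snd)
  have h2 : Measurable fun pq : E3R × E3R => ‖pq.2.1 - pq.1.1‖ :=
    ((measurable_fst.comp measurable_snd).sub (measurable_fst.comp measurable_fst)).norm
  exact Measurable.ite ((measurableSet_le h1 h2).inter
    (measurableSet_lt h2 (h1.add measurable_const))) measurable_const measurable_const

lemma link_le_one (ε : ℝ) (p q : E3R) : link ε p q ≤ 1 := by
  unfold link; split <;> simp

/-- the chain integrand on `m+1` globules -/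
def chainI (ψ : E3R → ℝ≥0∞) (rm rp ε : ℝ) (m : ℕ) (y : Fin (m+1) → E3R) : ℝ≥0∞ :=
  (∏ i, gI ψ rm rp (y i)) * ∏ k : Fin m, link ε (y k.castSucc) (y k.succ)

lemma measurable_chainI {ψ : E3R → ℝ≥0∞} (hψ : Measurable ψ) (rm rp ε : ℝ) (m : ℕ) :
    Measurable (chainI ψ rm rp ε m) := by
  apply Measurable.mul
  · exact Finset.measurable_prod _ fun i _ =>
      (measurable_gI hψ rm rp).comp (measurable_pi_apply i)
  · refine Finset.measurable_prod _ fun k _ => ?_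
    have h : Measurable fun a : Fin (m+1) → E3R => (a k.castSucc, a k.succ) :=
      (measurable_pi_apply _).prodMk (measurable_pi_apply _)
    exact (measurable_link ε).comp h

lemma volume_ball_E3 (x : EuclideanSpace ℝ (Fin 3)) (r : ℝ) (hr : 0 ≤ r) :
    volume (Metric.ball x r) = ENNReal.ofReal (Real.pi * (4/3) * r^3) := by
  rw [EuclideanSpace.volume_ball]
  have hcard : Fintype.card (Fin 3) = 3 := by simp
  rw [hcard]
  have hG : Real.Gamma ((3:ℝ) / 2 + 1) = 3 / 4 * Real.sqrt Real.pi := by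
    rw [Real.Gamma_add_one (by norm_num)]
    have : (3:ℝ)/2 = 1/2 + 1 := by norm_num
    rw [this, Real.Gamma_add_one (by norm_num), Real.Gamma_one_half_eq]
    ring
  have hsq : Real.sqrt Real.pi ^ 2 = Real.pi := Real.sq_sqrt Real.pi_pos.le
  have hsπ : (0:ℝ) < Real.sqrt Real.pi := Real.sqrt_pos.mpr Real.pi_pos
  have hconst : Real.sqrt Real.pi ^ 3 / Real.Gamma ((3:ℝ) / 2 + 1) = Real.pi * (4/3) := by
    rw [hG]
    field_simp
    nlinarith [hsq, hsπ]
  have : ((3:ℕ):ℝ) = 3 := by norm_num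
  rw [show (((3:ℕ)):ℝ)/2 + 1 = (3:ℝ)/2 + 1 by norm_num] at *
  rw [hconst, ← ENNReal.ofReal_pow hr, ← ENNReal.ofReal_mul (by positivity)]
  ring_nf

end Helpers

noncomputable section StepLemma
open Set MeasureTheory

lemma volume_shell_le (rp ε : ℝ) (hε0 : 0 < ε) (hε1 : ε ≤ 1)
    (p : EuclideanSpace ℝ (Fin 3)) (s : ℝ) (hs0 : 0 ≤ s) (hs : s ≤ 2 * rp) :
    volume {z : EuclideanSpace ℝ (Fin 3) | s ≤ ‖z - p‖ ∧ ‖z - p‖ < s + ε} ≤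
      ENNReal.ofReal (4 * Real.pi * (2 * rp + 1) ^ 2 * ε) := by
  have hsub : {z : EuclideanSpace ℝ (Fin 3) | s ≤ ‖z - p‖ ∧ ‖z - p‖ < s + ε} ⊆
      Metric.ball p (s + ε) \ Metric.ball p s := by
    intro z hz
    constructor
    · rw [Metric.mem_ball, dist_eq_norm]; exact hz.2
    · rw [Metric.mem_ball, dist_eq_norm, not_lt]; exact hz.1
  refine (measure_mono hsub).trans ?_
  have hdiff : volume (Metric.ball p (s + ε) \ Metric.ball p s) =
      volume (Metric.ball p (s + ε)) - volume (Metric.ball p s) := by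
    refine measure_diff (Metric.ball_subset_ball (by linarith)) measurableSet_ball.nullMeasurableSet ?_
    rw [volume_ball_E3 _ _ hs0]; exact ENNReal.ofReal_ne_top
  rw [hdiff, volume_ball_E3 _ _ (by linarith), volume_ball_E3 _ _ hs0,
    ← ENNReal.ofReal_sub _ (by positivity)]
  refine ENNReal.ofReal_le_ofReal ?_
  have h1 : Real.pi * (4/3) * (s + ε)^3 - Real.pi * (4/3) * s^3 =
      Real.pi * (4/3) * ((s+ε)^3 - s^3) := by ring
  rw [h1]
  have ha : s + ε ≤ 2*rp + 1 := by linarith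
  have ha0 : 0 ≤ s + ε := by linarith
  have hb : (s+ε)^2 ≤ (2*rp+1)^2 := by nlinarith
  have h2 : (s+ε)^3 - s^3 ≤ 3 * (2*rp+1)^2 * ε := by nlinarith [sq_nonneg s, sq_nonneg ε, mul_nonneg hs0 hε0.le, mul_le_mul_of_nonneg_left hb hε0.le]
  have hkey := mul_le_mul_of_nonneg_left h2 (by positivity : (0:ℝ) ≤ Real.pi * (4/3))
  have h3 : Real.pi * (4/3) * (3 * (2*rp+1)^2 * ε) = 4 * Real.pi * (2*rp+1)^2 * ε := by ring
  linarith

lemma step_lemma {ψ : E3R → ℝ≥0∞} (hψ : Measurable ψ) (rm rp ε : ℝ)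
    (hrm : 0 < rm) (hrmp : rm < rp) (hε0 : 0 < ε) (hε1 : ε ≤ 1)
    (p : E3R) (hp : p.2 ∈ Set.Icc rm rp) :
    ∫⁻ q : E3R, gI ψ rm rp q * link ε p q ≤
      ENNReal.ofReal (4 * Real.pi * (2 * rp + 1) ^ 2 * (rp - rm) * ε) := by
  set S : Set E3R := {q | q.2 ∈ Set.Icc rm rp ∧ p.2 + q.2 ≤ ‖q.1 - p.1‖ ∧
      ‖q.1 - p.1‖ < p.2 + q.2 + ε} with hS
  have hSm : MeasurableSet S := by
    have h1 : Measurable fun q : E3R => q.2 := measurable_snd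
    have h2 : Measurable fun q : E3R => p.2 + q.2 := measurable_const.add measurable_snd
    have h3 : Measurable fun q : E3R => ‖q.1 - p.1‖ := (measurable_fst.sub measurable_const).norm
    exact ((h1 measurableSet_Icc)).inter
      ((measurableSet_le h2 h3).inter (measurableSet_lt h3 (h2.add measurable_const)))
  have hpt : ∀ q, gI ψ rm rp q * link ε p q ≤ S.indicator 1 q := by
    intro q
    by_cases hq : q ∈ S
    · calc gI ψ rm rp q * link ε p q ≤ 1 * 1 :=
            mul_le_mul' ((gI_le_indicator ψ rm rp q).trans (by
              classical
              by_cases h : q ∈ (Set.univ ×ˢ Set.Icc rm rp : Set E3R) <;>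
                simp [Set.indicator_of_mem, Set.indicator_of_notMem, h]))
              (link_le_one ε p q)
      _ = S.indicator 1 q := by rw [Set.indicator_of_mem hq]; simp
    · -- one of the factors is zero
      have : gI ψ rm rp q * link ε p q = 0 := by
        rcases Classical.em (q.2 ∈ Set.Icc rm rp) with h2 | h2
        · have hlink : link ε p q = 0 := by
            unfold link
            rw [if_neg]
            intro hcond
            exact hq ⟨h2, hcond⟩
          rw [hlink, mul_zero]
        · have : gI ψ rm rp q = 0 := by
            unfold gI
            rw [Set.indicator_of_notMem (by simpa using h2), mul_zero]
          rw [this, zero_mul]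
      rw [this]
      exact zero_le
  calc ∫⁻ q, gI ψ rm rp q * link ε p q ≤ ∫⁻ q, S.indicator 1 q := lintegral_mono hpt
    _ = ∫⁻ q, S.indicator 1 q ∂((volume : Measure (EuclideanSpace ℝ (Fin 3))).prod volume) := by
        rw [← MeasureTheory.Measure.volume_eq_prod]
    _ = ∫⁻ r : ℝ, ∫⁻ z : EuclideanSpace ℝ (Fin 3), S.indicator 1 (z, r) := by
        rw [lintegral_prod_symm _ ((measurable_one.indicator hSm).aemeasurable)]
    _ ≤ ∫⁻ r : ℝ, (Set.Icc rm rp).indicator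
          (fun _ => ENNReal.ofReal (4 * Real.pi * (2 * rp + 1) ^ 2 * ε)) r := by
        refine lintegral_mono fun r => ?_
        by_cases hr : r ∈ Set.Icc rm rp
        · have hind : ∀ z, S.indicator (1 : E3R → ℝ≥0∞) (z, r) ≤
              ({z : EuclideanSpace ℝ (Fin 3) | p.2 + r ≤ ‖z - p.1‖ ∧
                ‖z - p.1‖ < p.2 + r + ε}).indicator 1 z := by
            intro z
            by_cases hzS : (z, r) ∈ S
            · rw [Set.indicator_of_mem hzS, Set.indicator_of_mem (show z ∈ _ from hzS.2)]
              simp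
            · rw [Set.indicator_of_notMem hzS]; exact zero_le
          calc ∫⁻ z, S.indicator 1 (z, r) ≤
                ∫⁻ z, ({z : EuclideanSpace ℝ (Fin 3) | p.2 + r ≤ ‖z - p.1‖ ∧
                  ‖z - p.1‖ < p.2 + r + ε}).indicator 1 z := lintegral_mono hind
            _ = volume {z : EuclideanSpace ℝ (Fin 3) | p.2 + r ≤ ‖z - p.1‖ ∧
                  ‖z - p.1‖ < p.2 + r + ε} := by
                rw [lintegral_indicator]
                · simp
                · have h3 : Measurable fun z : EuclideanSpace ℝ (Fin 3) => ‖z - p.1‖ :=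
                    (measurable_id.sub measurable_const).norm
                  exact (measurableSet_le measurable_const h3).inter
                    (measurableSet_lt h3 measurable_const)
            _ ≤ ENNReal.ofReal (4 * Real.pi * (2 * rp + 1) ^ 2 * ε) := by
                refine volume_shell_le rp ε hε0 hε1 p.1 (p.2 + r) ?_ ?_
                · have := hp.1; have := hr.1; linarith
                · have := hp.2; have := hr.2; linarith
            _ = (Set.Icc rm rp).indicator
                  (fun _ => ENNReal.ofReal (4 * Real.pi * (2 * rp + 1) ^ 2 * ε)) r := by
                rw [Set.indicator_of_mem hr]
        · have : ∀ z, S.indicator (1 : E3R → ℝ≥0∞) (z, r) = 0 := by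
            intro z
            refine Set.indicator_of_notMem (fun hzS => hr hzS.1) _
          simp only [this]
          simp
    _ = ENNReal.ofReal (4 * Real.pi * (2 * rp + 1) ^ 2 * ε) * volume (Set.Icc rm rp) := by
        rw [lintegral_indicator measurableSet_Icc]
        simp [mul_comm]
    _ = ENNReal.ofReal (4 * Real.pi * (2 * rp + 1) ^ 2 * (rp - rm) * ε) := by
        rw [Real.volume_Icc, ← ENNReal.ofReal_mul (by positivity)]
        ring_nf

end StepLemma

noncomputable section ChainBound
open Set MeasureTheory

lemma chainI_eq_zero_of_radius {ψ : E3R → ℝ≥0∞} {rm rp ε : ℝ} {m : ℕ}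
    {z : Fin (m+1) → E3R} {i : Fin (m+1)} (h : (z i).2 ∉ Set.Icc rm rp) :
    chainI ψ rm rp ε m z = 0 := by
  unfold chainI
  have : gI ψ rm rp (z i) = 0 := by
    unfold gI
    rw [Set.indicator_of_notMem (by simpa using h), mul_zero]
  rw [Finset.prod_eq_zero (Finset.mem_univ i) this, zero_mul]

lemma lintegral_gI {ψ : E3R → ℝ≥0∞} (hψ : Measurable ψ) (rm rp : ℝ) :
    ∫⁻ q : E3R, gI ψ rm rp q =
      ∫⁻ y in (Set.univ ×ˢ Set.Icc rm rp : Set E3R), expNeg (ψ y) := by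
  unfold gI
  rw [← lintegral_indicator (MeasurableSet.univ.prod measurableSet_Icc)]
  congr 1
  ext y
  classical
  by_cases h : y ∈ (Set.univ ×ˢ Set.Icc rm rp : Set E3R) <;>
    simp [Set.indicator_of_mem, Set.indicator_of_notMem, h]

lemma chain_bound {ψ : E3R → ℝ≥0∞} (hψ : Measurable ψ) (rm rp ε : ℝ)
    (hrm : 0 < rm) (hrmp : rm < rp) (hε0 : 0 < ε) (hε1 : ε ≤ 1) (m : ℕ) :
    ∫⁻ y : Fin (m+1) → E3R, chainI ψ rm rp ε m y ≤
      (∫⁻ y in (Set.univ ×ˢ Set.Icc rm rp : Set E3R), expNeg (ψ y)) *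
        ENNReal.ofReal (4 * Real.pi * (2 * rp + 1) ^ 2 * (rp - rm) * ε) ^ m := by
  set c : ℝ≥0∞ := ENNReal.ofReal (4 * Real.pi * (2 * rp + 1) ^ 2 * (rp - rm) * ε) with hc
  set I : ℝ≥0∞ := ∫⁻ y in (Set.univ ×ˢ Set.Icc rm rp : Set E3R), expNeg (ψ y) with hI
  induction m with
  | zero =>
    have h0 : ∀ y : Fin 1 → E3R, chainI ψ rm rp ε 0 y = gI ψ rm rp (y 0) := by
      intro y
      unfold chainI
      simp
    simp only [h0, pow_zero, mul_one]
    have hmp := measurePreserving_funUnique (volume : Measure E3R) (Fin 1)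
    have := hmp.lintegral_comp (measurable_gI hψ rm rp)
    rw [volume_pi]
    rw [hI, ← lintegral_gI hψ rm rp, ← this]
    apply le_of_eq
    congr 1
  | succ m ih =>
    -- peel the last coordinate
    set e := MeasurableEquiv.piFinSuccAbove (fun _ : Fin (m+2) => E3R) (Fin.last (m+1)) with he
    have hmp := measurePreserving_piFinSuccAbove (fun _ : Fin (m+2) => (volume : Measure E3R))
      (Fin.last (m+1))
    set F : E3R × (Fin (m+1) → E3R) → ℝ≥0∞ :=
      fun qz => chainI ψ rm rp ε m qz.2 * (gI ψ rm rp qz.1 * link ε (qz.2 (Fin.last m)) qz.1)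
      with hF
    have hFm : Measurable F := by
      apply Measurable.mul
      · exact (measurable_chainI hψ rm rp ε m).comp measurable_snd
      · apply Measurable.mul
        · exact (measurable_gI hψ rm rp).comp measurable_fst
        · have h : Measurable fun qz : E3R × (Fin (m+1) → E3R) =>
              ((qz.2 (Fin.last m), qz.1) : E3R × E3R) :=
            ((measurable_pi_apply _).comp measurable_snd).prodMk measurable_fst
          exact (measurable_link ε).comp h
    haveI hsf : SigmaFinite (Measure.pi fun _ : Fin (m+1) => (volume : Measure E3R)) :=
      MeasureTheory.Measure.pi.sigmaFinite _
    have hFe : ∀ y : Fin (m+2) → E3R, F (e y) = chainI ψ rm rp ε (m+1) y := by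
      intro y
      have he1 : (e y).1 = y (Fin.last (m+1)) := rfl
      have he2 : ∀ j : Fin (m+1), (e y).2 j = y j.castSucc := by
        intro j
        show y ((Fin.last (m+1)).succAbove j) = y j.castSucc
        rw [Fin.succAbove_last]
      rw [hF]
      simp only [he1, he2]
      unfold chainI
      rw [Fin.prod_univ_castSucc (f := fun i : Fin (m+2) => gI ψ rm rp (y i)),
        Fin.prod_univ_castSucc (f := fun k : Fin (m+1) => link ε (y k.castSucc) (y k.succ))]
      simp only [he2, Fin.succ_castSucc, Fin.succ_last]
      ring
    calc ∫⁻ y : Fin (m+2) → E3R, chainI ψ rm rp ε (m+1) y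
        = ∫⁻ y : Fin (m+2) → E3R, F (e y) ∂(Measure.pi fun _ => volume) := by
          rw [volume_pi]; simp only [hFe]
      _ = ∫⁻ qz, F qz ∂((volume : Measure E3R).prod (Measure.pi fun _ => volume)) :=
          hmp.lintegral_comp hFm
      _ = ∫⁻ z : Fin (m+1) → E3R, ∫⁻ q : E3R, F (q, z) ∂volume
            ∂(Measure.pi fun _ => volume) := by
          rw [lintegral_prod_symm _ hFm.aemeasurable]
      _ ≤ ∫⁻ z : Fin (m+1) → E3R, chainI ψ rm rp ε m z * c ∂(Measure.pi fun _ => volume) := by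
          refine lintegral_mono fun z => ?_
          have : ∫⁻ q : E3R, F (q, z) ∂volume =
              chainI ψ rm rp ε m z * ∫⁻ q : E3R, gI ψ rm rp q * link ε (z (Fin.last m)) q := by
            rw [hF]
            simp only
            rw [lintegral_const_mul]
            have h : Measurable fun q : E3R => ((z (Fin.last m), q) : E3R × E3R) :=
              measurable_const.prodMk measurable_id
            exact (measurable_gI hψ rm rp).mul ((measurable_link ε).comp h)
          rw [this]
          by_cases hz : (z (Fin.last m)).2 ∈ Set.Icc rm rp
          · exact mul_le_mul_right (step_lemma hψ rm rp ε hrm hrmp hε0 hε1 _ hz) _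
          · rw [chainI_eq_zero_of_radius hz, zero_mul, zero_mul]
      _ = (∫⁻ z : Fin (m+1) → E3R, chainI ψ rm rp ε m z ∂(Measure.pi fun _ => volume)) * c := by
          rw [lintegral_mul_const _ (measurable_chainI hψ rm rp ε m)]
      _ ≤ I * c ^ m * c := by
          rw [← volume_pi]
          exact mul_le_mul_left ih c
      _ = I * c ^ (m+1) := by rw [mul_assoc, ← pow_succ]

end ChainBound

noncomputable section LevelN
open Set MeasureTheory

lemma measurableSet_AgN (rm rp : ℝ) (n : ℕ) : MeasurableSet (AgN rm rp n) := by
  have h1 : MeasurableSet {x : Fin n → E3R | ∀ i, (x i).2 ∈ Set.Icc rm rp} := by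
    rw [Set.setOf_forall]
    exact MeasurableSet.iInter fun i =>
      (measurable_snd.comp (measurable_pi_apply i)) measurableSet_Icc
  have h2 : MeasurableSet {x : Fin n → E3R |
      ∀ i j : Fin n, i ≠ j → (x i).2 + (x j).2 ≤ ‖(x i).1 - (x j).1‖} := by
    rw [Set.setOf_forall]
    refine MeasurableSet.iInter fun i => ?_
    rw [Set.setOf_forall]
    refine MeasurableSet.iInter fun j => ?_
    by_cases hij : i = j
    · simp [hij]
    · have : {x : Fin n → E3R | i ≠ j → (x i).2 + (x j).2 ≤ ‖(x i).1 - (x j).1‖} =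
          {x : Fin n → E3R | (x i).2 + (x j).2 ≤ ‖(x i).1 - (x j).1‖} := by
        ext x; simp [hij]
      rw [this]
      have hm1 : Measurable fun x : Fin n → E3R => (x i).2 + (x j).2 :=
        (measurable_snd.comp (measurable_pi_apply i)).add
          (measurable_snd.comp (measurable_pi_apply j))
      have hm2 : Measurable fun x : Fin n → E3R => ‖(x i).1 - (x j).1‖ :=
        ((measurable_fst.comp (measurable_pi_apply i)).sub
          (measurable_fst.comp (measurable_pi_apply j))).norm
      exact measurableSet_le hm1 hm2
  have : AgN rm rp n = {x : Fin n → E3R | ∀ i, (x i).2 ∈ Set.Icc rm rp} ∩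
      {x : Fin n → E3R | ∀ i j : Fin n, i ≠ j → (x i).2 + (x j).2 ≤ ‖(x i).1 - (x j).1‖} := rfl
  rw [this]
  exact h1.inter h2

/-- the integrand of `nu` -/
def baseI (ψ : E3R → ℝ≥0∞) (rm rp : ℝ) (n : ℕ) (x : Fin n → E3R) : ℝ≥0∞ :=
  (∏ i : Fin n, expNeg (ψ (x i))) * (AgN rm rp n).indicator (fun _ => 1) x

lemma measurable_baseI {ψ : E3R → ℝ≥0∞} (hψ : Measurable ψ) (rm rp : ℝ) (n : ℕ) :
    Measurable (baseI ψ rm rp n) := by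
  apply Measurable.mul
  · exact Finset.measurable_prod _ fun i _ =>
      (measurable_expNeg.comp (hψ.comp (measurable_pi_apply i)))
  · exact measurable_const.indicator (measurableSet_AgN rm rp n)

lemma nu_eq_lintegral_baseI (ψ : E3R → ℝ≥0∞) (rm rp : ℝ) (n : ℕ) (A : Set (Fin n → E3R)) :
    nu ψ rm rp n A = ∫⁻ x in A, baseI ψ rm rp n x := rfl

lemma prev_succ {m : ℕ} (k : Fin m) : prev k.succ = k.castSucc := by
  ext
  simp [prev]

lemma nu_B_le {ψ : E3R → ℝ≥0∞} (hψ : Measurable ψ) {rm rp ε : ℝ}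
    (hrm : 0 < rm) (hrmp : rm < rp) (hε0 : 0 < ε) (hε1 : ε ≤ 1) (m n : ℕ)
    (f : Fin (m+1) → Fin n) (hf : Function.Injective f) :
    ∫⁻ x in {x : Fin n → E3R | ∀ k : Fin (m+1), (k : ℕ) ≠ 0 →
        ‖(x (f k)).1 - (x (f (prev k))).1‖ < (x (f k)).2 + (x (f (prev k))).2 + ε},
      baseI ψ rm rp n x ≤
    ((∫⁻ y in (Set.univ ×ˢ Set.Icc rm rp : Set E3R), expNeg (ψ y)) *
      ENNReal.ofReal (4 * Real.pi * (2 * rp + 1) ^ 2 * (rp - rm) * ε) ^ m) *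
      nu ψ rm rp (n - (m+1)) Set.univ := by
  classical
  set r := n - (m+1) with hr
  set B : Set (Fin n → E3R) := {x | ∀ k : Fin (m+1), (k : ℕ) ≠ 0 →
      ‖(x (f k)).1 - (x (f (prev k))).1‖ < (x (f k)).2 + (x (f (prev k))).2 + ε} with hB
  have hBm : MeasurableSet B := by
    rw [hB, Set.setOf_forall]
    refine MeasurableSet.iInter fun k => ?_
    by_cases hk : (k : ℕ) = 0
    · simp [hk]
    · have : {x : Fin n → E3R | (k : ℕ) ≠ 0 →
          ‖(x (f k)).1 - (x (f (prev k))).1‖ < (x (f k)).2 + (x (f (prev k))).2 + ε} =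
          {x : Fin n → E3R |
          ‖(x (f k)).1 - (x (f (prev k))).1‖ < (x (f k)).2 + (x (f (prev k))).2 + ε} := by
        ext x; simp [hk]
      rw [this]
      have hm2 : Measurable fun x : Fin n → E3R => ‖(x (f k)).1 - (x (f (prev k))).1‖ :=
        ((measurable_fst.comp (measurable_pi_apply (f k))).sub
          (measurable_fst.comp (measurable_pi_apply (f (prev k))))).norm
      have hm1 : Measurable fun x : Fin n → E3R => (x (f k)).2 + (x (f (prev k))).2 + ε :=
        (((measurable_snd.comp (measurable_pi_apply (f k))).add
          (measurable_snd.comp (measurable_pi_apply (f (prev k))))).add measurable_const)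
      exact measurableSet_lt hm2 hm1
  -- index bijection
  letI : DecidablePred (· ∈ Set.range f) := fun _ => Classical.propDecidable _
  have hcard : Fintype.card ↥(Set.range f)ᶜ = r := by
    rw [Fintype.card_compl_set, Set.card_range_of_injective hf]
    simp [hr]
  let e₂ : Fin r ≃ ↥(Set.range f)ᶜ := (Fintype.equivFinOfCardEq hcard).symm
  let e₁ : Fin (m+1) ≃ ↥(Set.range f) := Equiv.ofInjective f hf
  let σ : Fin (m+1) ⊕ Fin r ≃ Fin n := (e₁.sumCongr e₂).trans (Equiv.Set.sumCompl (Set.range f))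
  have hσl : ∀ k, σ (Sum.inl k) = f k := by
    intro k
    simp [σ, e₁]
  -- the product bound
  set G : (Fin n → E3R) → ℝ≥0∞ := fun x =>
    chainI ψ rm rp ε m (fun k => x (f k)) * baseI ψ rm rp r (fun j => x (σ (Sum.inr j)))
    with hG
  have hGm : Measurable G := by
    apply Measurable.mul
    · exact (measurable_chainI hψ rm rp ε m).comp
        (measurable_pi_lambda _ fun k => measurable_pi_apply (f k))
    · exact (measurable_baseI hψ rm rp r).comp
        (measurable_pi_lambda _ fun j => measurable_pi_apply (σ (Sum.inr j)))
  have hpt : ∀ x, B.indicator (baseI ψ rm rp n) x ≤ G x := by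
    intro x
    by_cases hxB : x ∈ B
    · rw [Set.indicator_of_mem hxB]
      by_cases hxA : x ∈ AgN rm rp n
      · -- equality case
        have hbase : baseI ψ rm rp n x = ∏ i : Fin n, expNeg (ψ (x i)) := by
          unfold baseI
          rw [Set.indicator_of_mem hxA, mul_one]
        have hchain : chainI ψ rm rp ε m (fun k => x (f k)) =
            ∏ k : Fin (m+1), expNeg (ψ (x (f k))) := by
          unfold chainI
          have h1 : ∀ k : Fin (m+1), gI ψ rm rp (x (f k)) = expNeg (ψ (x (f k))) := by
            intro k
            unfold gI
            have hmem : x (f k) ∈ (Set.univ ×ˢ Set.Icc rm rp : Set E3R) :=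
              Set.mem_prod.mpr ⟨Set.mem_univ _, hxA.1 (f k)⟩
            rw [Set.indicator_of_mem hmem]
            simp
          have h2 : ∀ k : Fin m, link ε (x (f k.castSucc)) (x (f k.succ)) = 1 := by
            intro k
            unfold link
            rw [if_pos]
            constructor
            · have hne : f k.succ ≠ f k.castSucc := by
                apply hf.ne
                simp [Fin.ext_iff]
              have := hxA.2 (f k.succ) (f k.castSucc) hne
              linarith [this]
            · have hk : ((k.succ : Fin (m+1)) : ℕ) ≠ 0 := by simp
              have := hxB k.succ hk
              rw [prev_succ] at this
              linarith [this]
          simp only [h1, h2]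
          simp
        have hrest : baseI ψ rm rp r (fun j => x (σ (Sum.inr j))) =
            ∏ j : Fin r, expNeg (ψ (x (σ (Sum.inr j)))) := by
          unfold baseI
          rw [Set.indicator_of_mem, mul_one]
          constructor
          · intro j; exact hxA.1 _
          · intro i j hij
            exact hxA.2 _ _ (σ.injective.ne (by simp [hij]))
        rw [hbase, hG]
        simp only
        rw [hchain, hrest]
        have hsplit : ∏ i : Fin n, expNeg (ψ (x i)) =
            (∏ k : Fin (m+1), expNeg (ψ (x (σ (Sum.inl k))))) *
              ∏ j : Fin r, expNeg (ψ (x (σ (Sum.inr j)))) := by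
          rw [← Equiv.prod_comp σ fun i => expNeg (ψ (x i))]
          exact Fintype.prod_sum_type fun j' => expNeg (ψ (x (σ j')))
        simp only [hσl] at hsplit
        rw [hsplit]
      · unfold baseI
        rw [Set.indicator_of_notMem hxA, mul_zero]
        exact zero_le
    · rw [Set.indicator_of_notMem hxB]
      exact zero_le
  -- Fubini via the bijection
  haveI hsf1 : SigmaFinite (Measure.pi fun _ : Fin (m+1) => (volume : Measure E3R)) :=
    MeasureTheory.Measure.pi.sigmaFinite _
  haveI hsf2 : SigmaFinite (Measure.pi fun _ : Fin r => (volume : Measure E3R)) :=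
    MeasureTheory.Measure.pi.sigmaFinite _
  haveI hsf3 : ∀ i : Fin (m+1) ⊕ Fin r, SigmaFinite ((fun _ => (volume : Measure E3R)) i) :=
    fun _ => by infer_instance
  have hmp1 := measurePreserving_sumPiEquivProdPi_symm
    (X := fun _ : Fin (m+1) ⊕ Fin r => E3R) (fun _ => (volume : Measure E3R))
  have hmp2 := measurePreserving_piCongrLeft (fun _ : Fin n => (volume : Measure E3R)) σ
  have hmp := hmp2.comp hmp1
  set Φ := fun w : (Fin (m+1) → E3R) × (Fin r → E3R) =>
    (MeasurableEquiv.piCongrLeft (fun _ : Fin n => E3R) σ)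
      ((MeasurableEquiv.sumPiEquivProdPi (fun _ : Fin (m+1) ⊕ Fin r => E3R)).symm w) with hΦ
  have hΦval : ∀ (w : (Fin (m+1) → E3R) × (Fin r → E3R)) (j : Fin (m+1) ⊕ Fin r),
      Φ w (σ j) = Sum.elim w.1 w.2 j := by
    intro w j
    show (MeasurableEquiv.piCongrLeft (fun _ : Fin n => E3R) σ)
      ((MeasurableEquiv.sumPiEquivProdPi (fun _ : Fin (m+1) ⊕ Fin r => E3R)).symm w) (σ j) =
      Sum.elim w.1 w.2 j
    rw [MeasurableEquiv.coe_piCongrLeft, Equiv.piCongrLeft_apply_apply]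
    rw [MeasurableEquiv.coe_sumPiEquivProdPi_symm]
    cases j <;> simp [Equiv.sumPiEquivProdPi_symm_apply]
  calc ∫⁻ x in B, baseI ψ rm rp n x = ∫⁻ x, B.indicator (baseI ψ rm rp n) x := by
        rw [lintegral_indicator hBm]
    _ ≤ ∫⁻ x, G x := lintegral_mono hpt
    _ = ∫⁻ x, G x ∂(Measure.pi fun _ => volume) := by rw [volume_pi]
    _ = ∫⁻ w, G (Φ w) ∂((Measure.pi fun _ : Fin (m+1) => (volume : Measure E3R)).prod
          (Measure.pi fun _ : Fin r => (volume : Measure E3R))) := (hmp.lintegral_comp hGm).symm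
    _ = ∫⁻ w, chainI ψ rm rp ε m w.1 * baseI ψ rm rp r w.2
          ∂((Measure.pi fun _ : Fin (m+1) => (volume : Measure E3R)).prod
            (Measure.pi fun _ : Fin r => (volume : Measure E3R))) := by
        refine lintegral_congr fun w => ?_
        rw [hG]
        simp only
        congr 1
        · congr 1
          funext k
          have := hΦval w (Sum.inl k)
          rw [hσl] at this
          rw [this]
          simp
        · congr 1
          funext j
          rw [hΦval w (Sum.inr j)]
          simp
    _ = (∫⁻ y, chainI ψ rm rp ε m y ∂(Measure.pi fun _ => volume)) *
          ∫⁻ z, baseI ψ rm rp r z ∂(Measure.pi fun _ => volume) := by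
        exact lintegral_prod_mul (measurable_chainI hψ rm rp ε m).aemeasurable
          (measurable_baseI hψ rm rp r).aemeasurable
    _ ≤ ((∫⁻ y in (Set.univ ×ˢ Set.Icc rm rp : Set E3R), expNeg (ψ y)) *
          ENNReal.ofReal (4 * Real.pi * (2 * rp + 1) ^ 2 * (rp - rm) * ε) ^ m) *
          nu ψ rm rp r Set.univ := by
        refine mul_le_mul' ?_ ?_
        · rw [← volume_pi]
          exact chain_bound hψ rm rp ε hrm hrmp hε0 hε1 m
        · rw [← volume_pi, nu_eq_lintegral_baseI, Measure.restrict_univ]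

end LevelN

noncomputable section Final
open Set MeasureTheory

lemma nu_chainSet_le {ψ : E3R → ℝ≥0∞} (hψ : Measurable ψ) {rm rp ε : ℝ}
    (hrm : 0 < rm) (hrmp : rm < rp) (hε0 : 0 < ε) (hε1 : ε ≤ 1) (m n : ℕ) :
    nu ψ rm rp n (chainSet (m+1) n ε) ≤ (n.descFactorial (m+1) : ℝ≥0∞) *
      (((∫⁻ y in (Set.univ ×ˢ Set.Icc rm rp : Set E3R), expNeg (ψ y)) *
        ENNReal.ofReal (4 * Real.pi * (2 * rp + 1) ^ 2 * (rp - rm) * ε) ^ m) *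
        nu ψ rm rp (n - (m+1)) Set.univ) := by
  classical
  set K : ℝ≥0∞ := ((∫⁻ y in (Set.univ ×ˢ Set.Icc rm rp : Set E3R), expNeg (ψ y)) *
      ENNReal.ofReal (4 * Real.pi * (2 * rp + 1) ^ 2 * (rp - rm) * ε) ^ m) *
      nu ψ rm rp (n - (m+1)) Set.univ with hK
  set T : (Fin (m+1) → Fin n) → Set (Fin n → E3R) := fun f =>
    {x | Function.Injective f ∧ ∀ k : Fin (m+1), (k : ℕ) ≠ 0 →
      ‖(x (f k)).1 - (x (f (prev k))).1‖ < (x (f k)).2 + (x (f (prev k))).2 + ε} with hT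
  have hcover : chainSet (m+1) n ε = ⋃ f, T f := by
    ext x
    simp only [chainSet, hT, Set.mem_iUnion, Set.mem_setOf_eq]
  rw [nu_eq_lintegral_baseI, hcover]
  have hbound : ∀ f : Fin (m+1) → Fin n,
      ∫⁻ x in T f, baseI ψ rm rp n x ≤ if Function.Injective f then K else 0 := by
    intro f
    by_cases hf : Function.Injective f
    · rw [if_pos hf]
      have hTf : T f = {x : Fin n → E3R | ∀ k : Fin (m+1), (k : ℕ) ≠ 0 →
          ‖(x (f k)).1 - (x (f (prev k))).1‖ < (x (f k)).2 + (x (f (prev k))).2 + ε} := by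
        ext x
        simp only [hT, Set.mem_setOf_eq, and_iff_right hf]
      rw [hTf, hK]
      exact nu_B_le hψ hrm hrmp hε0 hε1 m n f hf
    · rw [if_neg hf]
      have hTf : T f = ∅ := by
        ext x
        simp [hT, hf]
      rw [hTf]
      simp
  calc ∫⁻ x in ⋃ f, T f, baseI ψ rm rp n x
      ≤ ∑' f : Fin (m+1) → Fin n, ∫⁻ x in T f, baseI ψ rm rp n x :=
        lintegral_iUnion_le _ _
    _ = ∑ f : Fin (m+1) → Fin n, ∫⁻ x in T f, baseI ψ rm rp n x := tsum_fintype _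
    _ ≤ ∑ f : Fin (m+1) → Fin n, if Function.Injective f then K else 0 :=
        Finset.sum_le_sum fun f _ => hbound f
    _ = ((Finset.univ.filter fun f : Fin (m+1) → Fin n => Function.Injective f).card : ℝ≥0∞)
          * K := by
        rw [← Finset.sum_filter, Finset.sum_const, nsmul_eq_mul]
    _ = (n.descFactorial (m+1) : ℝ≥0∞) * K := by
        congr 2
        rw [← Fintype.card_subtype]
        rw [Fintype.card_congr (Equiv.subtypeInjectiveEquivEmbedding (Fin (m+1)) (Fin n))]
        rw [Fintype.card_embedding_eq]
        simp

end Final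

noncomputable section MainAux
open Set MeasureTheory

lemma chainSet_eq_empty {M n : ℕ} (h : n < M) (ε : ℝ) : chainSet M n ε = ∅ := by
  ext x
  simp only [chainSet, Set.mem_setOf_eq, Set.mem_empty_iff_false, iff_false]
  rintro ⟨f, hf, -⟩
  have := Fintype.card_le_of_injective f hf
  simp at this
  omega

lemma nu_empty (ψ : E3R → ℝ≥0∞) (rm rp : ℝ) (n : ℕ) : nu ψ rm rp n ∅ = 0 := by
  rw [nu_eq_lintegral_baseI]
  simp

end MainAux


/-- summing the chain estimate over `n` (note `chainSet M n ε = ∅` when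
`n < M` since there is no injection `Fin M → Fin n`), and the resulting bound for the
probability of an `ε`-chain under the normalized Poisson mixture of the `ν_n`. -/
theorem statement12 (M : ℕ) (hM : 2 ≤ M) (rm rp : ℝ)
    (hrm : 0 < rm) (hrmp : rm < rp) (ε : ℝ) (hε0 : 0 < ε) (hε1 : ε ≤ 1)
    (ψ : E3R → ℝ≥0∞) (hψ : Measurable ψ) :
    (∑' n : ℕ, (n.factorial : ℝ≥0∞)⁻¹ * nu ψ rm rp n (chainSet M n ε)) ≤
      (∫⁻ y in (Set.univ ×ˢ Set.Icc rm rp : Set E3R), expNeg (ψ y)) *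
        ENNReal.ofReal (4 * Real.pi * (2 * rp + 1) ^ 2 * (rp - rm) * ε) ^ (M - 1) *
        (∑' m : ℕ, (m.factorial : ℝ≥0∞)⁻¹ * nu ψ rm rp m Set.univ) ∧
    (∑' n : ℕ, (n.factorial : ℝ≥0∞)⁻¹ * nu ψ rm rp n (chainSet M n ε)) /
        (∑' m : ℕ, (m.factorial : ℝ≥0∞)⁻¹ * nu ψ rm rp m Set.univ) ≤
      (∫⁻ y in (Set.univ ×ˢ Set.Icc rm rp : Set E3R), expNeg (ψ y)) *
        ENNReal.ofReal (4 * Real.pi * (2 * rp + 1) ^ 2 * (rp - rm)) ^ (M - 1) *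
        ENNReal.ofReal ε ^ (M - 1) := by
  classical
  obtain ⟨m, rfl⟩ : ∃ m, M = m + 1 := ⟨M - 1, by omega⟩
  have hMm : (m + 1) - 1 = m := by omega
  rw [hMm]
  set I : ℝ≥0∞ := ∫⁻ y in (Set.univ ×ˢ Set.Icc rm rp : Set E3R), expNeg (ψ y) with hI
  set c : ℝ≥0∞ := ENNReal.ofReal (4 * Real.pi * (2 * rp + 1) ^ 2 * (rp - rm) * ε) with hc
  set S : ℝ≥0∞ := ∑' m' : ℕ, (m'.factorial : ℝ≥0∞)⁻¹ * nu ψ rm rp m' Set.univ with hS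
  -- the auxiliary upper bound sequence
  set aux : ℕ → ℝ≥0∞ := fun n =>
    if m + 1 ≤ n then ((n - (m+1)).factorial : ℝ≥0∞)⁻¹ * (I * c ^ m * nu ψ rm rp (n - (m+1)) Set.univ)
    else 0 with haux
  have key : ∀ n : ℕ, (n.factorial : ℝ≥0∞)⁻¹ * nu ψ rm rp n (chainSet (m+1) n ε) ≤ aux n := by
    intro n
    by_cases hn : m + 1 ≤ n
    · rw [haux]
      simp only [if_pos hn]
      calc (n.factorial : ℝ≥0∞)⁻¹ * nu ψ rm rp n (chainSet (m+1) n ε)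
          ≤ (n.factorial : ℝ≥0∞)⁻¹ * ((n.descFactorial (m+1) : ℝ≥0∞) *
              (I * c ^ m * nu ψ rm rp (n - (m+1)) Set.univ)) :=
            mul_le_mul_right (nu_chainSet_le hψ hrm hrmp hε0 hε1 m n) _
        _ = ((n.factorial : ℝ≥0∞)⁻¹ * (n.descFactorial (m+1) : ℝ≥0∞)) *
              (I * c ^ m * nu ψ rm rp (n - (m+1)) Set.univ) := by ring
        _ = ((n - (m+1)).factorial : ℝ≥0∞)⁻¹ *
              (I * c ^ m * nu ψ rm rp (n - (m+1)) Set.univ) := by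
            congr 1
            have hfac : (n - (m+1)).factorial * n.descFactorial (m+1) = n.factorial :=
              Nat.factorial_mul_descFactorial hn
            have hd0 : (n.descFactorial (m+1) : ℝ≥0∞) ≠ 0 :=
              Nat.cast_ne_zero.mpr fun h0 =>
                absurd (Nat.descFactorial_eq_zero_iff_lt.mp h0) (by omega)
            have hdt : (n.descFactorial (m+1) : ℝ≥0∞) ≠ ⊤ := ENNReal.natCast_ne_top _
            rw [← hfac]
            push_cast
            rw [ENNReal.mul_inv (Or.inl (by simp [Nat.factorial_ne_zero]))
              (Or.inl (ENNReal.natCast_ne_top _))]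
            rw [mul_assoc, ENNReal.inv_mul_cancel hd0 hdt, mul_one]
    · rw [chainSet_eq_empty (by omega) ε, nu_empty, mul_zero]
      exact zero_le
  have hsum1 : (∑' n : ℕ, (n.factorial : ℝ≥0∞)⁻¹ * nu ψ rm rp n (chainSet (m+1) n ε)) ≤
      ∑' n, aux n := ENNReal.tsum_le_tsum key
  have hshift : ∑' n, aux n = ∑' i : ℕ, aux (i + (m+1)) := by
    refine (Function.Injective.tsum_eq (f := aux) (g := fun i : ℕ => i + (m+1))
      (add_left_injective (m+1)) ?_).symm
    intro n hn
    rw [Function.mem_support] at hn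
    have : m + 1 ≤ n := by
      by_contra h
      rw [haux] at hn
      simp only [if_neg h] at hn
      exact hn rfl
    exact ⟨n - (m+1), Nat.sub_add_cancel this⟩
  have haux_shift : ∀ i : ℕ, aux (i + (m+1)) =
      I * c ^ m * ((i.factorial : ℝ≥0∞)⁻¹ * nu ψ rm rp i Set.univ) := by
    intro i
    rw [haux]
    simp only [if_pos (by omega : m + 1 ≤ i + (m+1))]
    rw [Nat.add_sub_cancel]
    ring
  have hfirst : (∑' n : ℕ, (n.factorial : ℝ≥0∞)⁻¹ * nu ψ rm rp n (chainSet (m+1) n ε)) ≤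
      I * c ^ m * S := by
    refine hsum1.trans ?_
    rw [hshift]
    simp only [haux_shift]
    rw [ENNReal.tsum_mul_left, hS]
  constructor
  · exact hfirst
  · have hdiv : (∑' n : ℕ, (n.factorial : ℝ≥0∞)⁻¹ * nu ψ rm rp n (chainSet (m+1) n ε)) / S ≤
        I * c ^ m := by
      calc (∑' n : ℕ, (n.factorial : ℝ≥0∞)⁻¹ * nu ψ rm rp n (chainSet (m+1) n ε)) / S
          ≤ (I * c ^ m * S) / S := ENNReal.div_le_div_right hfirst S
        _ = (I * c ^ m) * (S / S) := by rw [mul_div_assoc]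
        _ ≤ (I * c ^ m) * 1 := mul_le_mul_right ENNReal.div_self_le_one _
        _ = I * c ^ m := mul_one _
    refine hdiv.trans ?_
    have hcsplit : c = ENNReal.ofReal (4 * Real.pi * (2 * rp + 1) ^ 2 * (rp - rm)) *
        ENNReal.ofReal ε := by
      rw [hc, ← ENNReal.ofReal_mul]
      have h1 : (0:ℝ) ≤ (2 * rp + 1) ^ 2 := sq_nonneg _
      have h2 : (0:ℝ) ≤ rp - rm := by linarith
      positivity
    rw [hcsplit, mul_pow, ← mul_assoc]
end
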